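/- arXiv:2212.10721 — 7 statements merged into one kernel-verified Lean document; each statement's English description precedes it below -/
import Mathlib

section
/- Let n ≥ 1 and a ∈ ℤ_{n+1}, and let VT_a(n) = {x ∈ {0,1}^n : Σ_{i=1}^n i·x_i ≡ a (mod n+1)}. Then VT_a(n) corrects a single deletion: for any two distinct codewords x, x̃ ∈ VT_a(n), there is no sequence z ∈ {0,1}^{n-1} that can be obtained both from x by deleting one coordinate and from x̃ by deleting one coordinate. -/
lemma sum_getD (l : List ℕ) : ∑ i ∈ Finset.range l.length, l.getD i 0 = l.sum := by
  induction l with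
  | nil => simp
  | cons c t ih =>
    rw [List.length_cons, Finset.sum_range_succ']
    simp only [List.getD_cons_succ, List.getD_cons_zero, List.sum_cons]
    rw [ih]; omega

/-- VT syndrome of a sequence (1-indexed): `Syn(x) = ∑ i * x_i`. -/
def synL (l : List ℕ) : ℕ := ∑ i ∈ Finset.range l.length, (i + 1) * l.getD i 0

lemma synL_cons (c : ℕ) (l : List ℕ) : synL (c :: l) = c + l.sum + synL l := by
  unfold synL
  rw [List.length_cons, Finset.sum_range_succ']
  simp only [List.getD_cons_succ, List.getD_cons_zero]
  have h : ∀ i, (i + 1 + 1) * l.getD i 0 = (i + 1) * l.getD i 0 + l.getD i 0 := by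
    intro i; ring
  simp only [h, Finset.sum_add_distrib, sum_getD]
  omega

lemma sum_insertIdx (b : ℕ) : ∀ (l : List ℕ) (i : ℕ), i ≤ l.length →
    (l.insertIdx i b).sum = l.sum + b := by
  intro l
  induction l with
  | nil =>
    intro i hi
    simp at hi; subst hi; simp
  | cons c t ih =>
    intro i hi
    match i with
    | 0 => simp [List.insertIdx_zero]; omega
    | Nat.succ i =>
      rw [List.insertIdx_succ_cons, List.sum_cons, List.sum_cons, ih i (by simpa using hi)]
      omega

lemma synL_insertIdx (b : ℕ) : ∀ (l : List ℕ) (i : ℕ), i ≤ l.length →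
    synL (l.insertIdx i b) = synL l + (i + 1) * b + (l.drop i).sum := by
  intro l
  induction l with
  | nil =>
    intro i hi
    simp at hi; subst hi
    simp [synL_cons, synL]
  | cons c t ih =>
    intro i hi
    match i with
    | 0 => simp [List.insertIdx_zero, synL_cons]; ring
    | Nat.succ i =>
      rw [List.insertIdx_succ_cons, synL_cons, ih i (by simpa using hi), synL_cons,
        sum_insertIdx b t i (by simpa using hi)]
      simp only [List.drop_succ_cons, Nat.succ_eq_add_one]
      ring

lemma insertIdx_eraseIdx_getD : ∀ (l : List ℕ) (i : ℕ), i < l.length →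
    (l.eraseIdx i).insertIdx i (l.getD i 0) = l := by
  intro l
  induction l with
  | nil => simp
  | cons c t ih =>
    intro i hi
    match i with
    | 0 => simp
    | Nat.succ i =>
      rw [List.getD_cons_succ, List.eraseIdx_cons_succ, List.insertIdx_succ_cons,
        ih i (by simpa using hi)]

lemma insertIdx_append_len (b : ℕ) : ∀ (u w : List ℕ), (u ++ w).insertIdx u.length b = u ++ b :: w := by
  intro u
  induction u with
  | nil => simp
  | cons c t ih => intro w; simp [List.insertIdx_succ_cons, ih]

lemma sum_le_length : ∀ (l : List ℕ), (∀ x ∈ l, x ≤ 1) → l.sum ≤ l.length := by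
  intro l
  induction l with
  | nil => simp
  | cons c t ih =>
    intro hb
    have h1 := hb c (by simp)
    have h2 := ih (fun x hx => hb x (by simp [hx]))
    simp only [List.sum_cons, List.length_cons]
    omega

lemma all_zero_of_sum_eq_zero : ∀ (l : List ℕ), l.sum = 0 →
    l = List.replicate l.length 0 := by
  intro l
  induction l with
  | nil => simp
  | cons c t ih =>
    intro hs
    simp only [List.sum_cons] at hs
    have hc : c = 0 := by omega
    have := ih (by omega)
    simp [List.replicate_succ, hc, ← this]

lemma all_one_of_sum_eq_len : ∀ (l : List ℕ), (∀ x ∈ l, x ≤ 1) → l.sum = l.length →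
    l = List.replicate l.length 1 := by
  intro l
  induction l with
  | nil => simp
  | cons c t ih =>
    intro hb hs
    have hc : c ≤ 1 := hb c (by simp)
    have hts : t.sum ≤ t.length := sum_le_length t (fun x hx => hb x (by simp [hx]))
    simp only [List.sum_cons, List.length_cons] at hs
    have hc1 : c = 1 := by omega
    have := ih (fun x hx => hb x (by simp [hx])) (by omega)
    simp [List.replicate_succ, hc1, ← this]

lemma core (n i j b b' : ℕ) (z : List ℕ) (hzlen : z.length = n - 1) (hn : 1 ≤ n)
    (hij : i ≤ j) (hj : j < n) (hb : b ≤ 1) (hb' : b' ≤ 1)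
    (hzbin : ∀ c ∈ z, c ≤ 1)
    (hsyn : synL (z.insertIdx i b) % (n + 1) = synL (z.insertIdx j b') % (n + 1)) :
    z.insertIdx i b = z.insertIdx j b' := by
  have hjz : j ≤ z.length := by omega
  have hiz : i ≤ z.length := by omega
  set Wi := (z.drop i).sum with hWi
  set Wj := (z.drop j).sum with hWj
  rw [synL_insertIdx b z i hiz, synL_insertIdx b' z j hjz] at hsyn
  -- bounds
  have hWib : Wi ≤ z.length - i := by
    have h1 := sum_le_length (z.drop i) (fun x hx => hzbin x (List.mem_of_mem_drop hx))
    rwa [List.length_drop] at h1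
  have hWjb : Wj ≤ z.length - j := by
    have h1 := sum_le_length (z.drop j) (fun x hx => hzbin x (List.mem_of_mem_drop hx))
    rwa [List.length_drop] at h1
  have hmulb : (i + 1) * b ≤ i + 1 := by nlinarith
  have hmulb' : (j + 1) * b' ≤ j + 1 := by nlinarith
  have hA : (i + 1) * b + Wi < n + 1 := by omega
  have hB : (j + 1) * b' + Wj < n + 1 := by omega
  have heq : (i + 1) * b + Wi = (j + 1) * b' + Wj := by
    have hm : Nat.ModEq (n + 1) (synL z + ((i + 1) * b + Wi)) (synL z + ((j + 1) * b' + Wj)) := by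
      unfold Nat.ModEq
      rw [← add_assoc, ← add_assoc]
      exact hsyn
    have h2 := (Nat.ModEq.add_left_cancel' (synL z) hm)
    unfold Nat.ModEq at h2
    rwa [Nat.mod_eq_of_lt hA, Nat.mod_eq_of_lt hB] at h2
  -- slice decomposition
  set s := (z.drop i).take (j - i) with hs
  have hsplit : z.drop i = s ++ z.drop j := by
    have h := List.drop_take_append_drop z i (j - i)
    rw [show i + (j - i) = j from by omega] at h
    exact h.symm
  have hslen : s.length = j - i := by
    rw [hs, List.length_take, List.length_drop]; omega
  have hsmem : ∀ x ∈ s, x ≤ 1 := by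
    intro x hx
    refine hzbin x (List.mem_of_mem_drop (l := z) (i := i) ?_)
    rw [hsplit]; exact List.mem_append_left _ hx
  have hWsum : Wi = s.sum + Wj := by rw [hWi, hsplit, List.sum_append]
  have hssle : s.sum ≤ j - i := by
    have h1 := sum_le_length s hsmem
    omega
  -- determine b = b' and s = replicate (j-i) b
  have hbb : b = b' ∧ s.sum = (j - i) * b := by
    interval_cases b <;> interval_cases b' <;> omega
  obtain ⟨rfl, hssum⟩ := hbb
  have hrep : s = List.replicate (j - i) b := by
    rw [← hslen]
    interval_cases b
    · exact all_zero_of_sum_eq_zero s (by omega)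
    · exact all_one_of_sum_eq_len s hsmem (by omega)
  -- now show the two insertions coincide
  have hzdecomp : z = z.take i ++ (s ++ z.drop j) := by
    rw [← hsplit, List.take_append_drop]
  have htlen : (z.take i).length = i := by rw [List.length_take]; omega
  have h1 : z.insertIdx i b = z.take i ++ b :: (s ++ z.drop j) := by
    have h := insertIdx_append_len b (z.take i) (s ++ z.drop j)
    rw [htlen] at h
    rw [← hzdecomp] at h
    exact h
  have htslen : (z.take i ++ s).length = j := by
    rw [List.length_append, htlen, hslen]; omega
  have hzd2 : z = (z.take i ++ s) ++ z.drop j := by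
    rw [List.append_assoc, ← hzdecomp]
  have h2 : z.insertIdx j b = (z.take i ++ s) ++ b :: z.drop j := by
    have h := insertIdx_append_len b (z.take i ++ s) (z.drop j)
    rw [htslen] at h
    rw [← hzd2] at h
    exact h
  have hflip : b :: List.replicate (j - i) b = List.replicate (j - i) b ++ [b] := by
    rw [← List.replicate_succ, List.replicate_succ']
  rw [h1, h2, hrep, List.append_assoc]
  congr 1
  rw [← List.cons_append, hflip, List.append_assoc, List.singleton_append]

theorem stmt_0 (n : ℕ) (hn : 1 ≤ n) (a : ℕ) (ha : a < n + 1)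
    (x x' : List ℕ)
    (hxlen : x.length = n) (hxbin : ∀ b ∈ x, b ≤ 1) (hxsyn : synL x % (n + 1) = a)
    (hx'len : x'.length = n) (hx'bin : ∀ b ∈ x', b ≤ 1) (hx'syn : synL x' % (n + 1) = a)
    (hne : x ≠ x') :
    ¬ ∃ z : List ℕ, (∃ i < n, z = x.eraseIdx i) ∧ (∃ i < n, z = x'.eraseIdx i) := by
  rintro ⟨z, ⟨i, hi, hzx⟩, ⟨j, hj, hzx'⟩⟩
  have hix : i < x.length := by omega
  have hjx : j < x'.length := by omega
  have hzlen : z.length = n - 1 := by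
    have h := List.length_eraseIdx_add_one hix
    rw [hzx]; omega
  have hzbin : ∀ c ∈ z, c ≤ 1 := fun c hc =>
    hxbin c (List.Sublist.subset (List.eraseIdx_sublist x i) (hzx ▸ hc))
  have hxrec : z.insertIdx i (x.getD i 0) = x := by
    rw [hzx]; exact insertIdx_eraseIdx_getD x i hix
  have hx'rec : z.insertIdx j (x'.getD j 0) = x' := by
    rw [hzx']; exact insertIdx_eraseIdx_getD x' j hjx
  have hbx : x.getD i 0 ≤ 1 := by
    rw [List.getD_eq_getElem x 0 hix]
    exact hxbin _ (List.getElem_mem hix)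
  have hbx' : x'.getD j 0 ≤ 1 := by
    rw [List.getD_eq_getElem x' 0 hjx]
    exact hx'bin _ (List.getElem_mem hjx)
  rcases le_total i j with hij | hij
  · refine hne ?_
    have h := core n i j _ _ z hzlen hn hij hj hbx hbx' hzbin
      (by rw [hxrec, hx'rec, hxsyn, hx'syn])
    rw [← hxrec, ← hx'rec]
    exact h
  · refine hne ?_
    have h := core n j i _ _ z hzlen hn hij hi hbx' hbx hzbin
      (by rw [hxrec, hx'rec, hxsyn, hx'syn])
    rw [← hxrec, ← hx'rec]
    exact h.symm
end

section
/- Let n ≥ 1 and a ∈ ℤ_{n+1}, and let VT_a(n) = {x ∈ {0,1}^n : Σ_{i=1}^n i·x_i ≡ a (mod n+1)}. Then VT_a(n) corrects a single insertion: for any two distinct codewords x, x̃ ∈ VT_a(n), there is no sequence z ∈ {0,1}^{n+1} that can be obtained both from x by inserting one bit and from x̃ by inserting one bit (equivalently, no z of length n+1 has both x and x̃ as subsequences obtained by deleting one coordinate of z). -/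
lemma getD_eraseIdx (z : List ℕ) (i : ℕ) (hi : i < z.length) (k : ℕ) :
    (z.eraseIdx i).getD k 0 = if k < i then z.getD k 0 else z.getD (k + 1) 0 := by
  have hlen : (z.eraseIdx i).length = z.length - 1 := by
    rw [List.length_eraseIdx]; simp [hi]
  by_cases hk : k < z.length - 1
  · rw [List.getD_eq_getElem _ _ (by omega), List.getElem_eraseIdx]
    split
    · exact (List.getD_eq_getElem _ _ (by omega)).symm
    · exact (List.getD_eq_getElem _ _ (by omega)).symm
  · rw [List.getD_eq_default _ _ (by omega)]
    have hki : ¬ k < i := by omega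
    rw [if_neg hki, List.getD_eq_default _ _ (by omega)]

lemma synB (z : List ℕ) (i : ℕ) (hi : i < z.length) :
    synL z = synL (z.eraseIdx i) + (i + 1) * z.getD i 0
      + ∑ k ∈ Finset.Ico (i + 1) z.length, z.getD k 0 := by
  obtain ⟨d, hd⟩ : ∃ d, z.length = i + (d + 1) := ⟨z.length - i - 1, by omega⟩
  have hxlen : (z.eraseIdx i).length = i + d := by
    rw [List.length_eraseIdx]; simp [hi]; omega
  have hxg : ∀ k, (z.eraseIdx i).getD k 0 = if k < i then z.getD k 0 else z.getD (k + 1) 0 :=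
    getD_eraseIdx z i hi
  have hz : synL z = ∑ k ∈ Finset.range i, (k + 1) * z.getD k 0
      + (∑ k ∈ Finset.range d, (i + (k + 1) + 1) * z.getD (i + (k + 1)) 0
        + (i + 0 + 1) * z.getD (i + 0) 0) := by
    unfold synL; rw [hd, Finset.sum_range_add, Finset.sum_range_succ']
  have hx : synL (z.eraseIdx i) = ∑ k ∈ Finset.range i, (k + 1) * z.getD k 0
      + ∑ k ∈ Finset.range d, (i + k + 1) * z.getD (i + k + 1) 0 := by
    unfold synL; rw [hxlen, Finset.sum_range_add]
    congr 1
    · apply Finset.sum_congr rfl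
      intro k hk
      rw [hxg k, if_pos (Finset.mem_range.mp hk)]
    · apply Finset.sum_congr rfl
      intro k _
      rw [hxg (i + k), if_neg (by omega)]
  have hIco : ∑ k ∈ Finset.Ico (i + 1) z.length, z.getD k 0
      = ∑ k ∈ Finset.range d, z.getD (i + k + 1) 0 := by
    rw [hd, Finset.sum_Ico_eq_sum_range]
    have hcard : i + (d + 1) - (i + 1) = d := by omega
    rw [hcard]
    apply Finset.sum_congr rfl
    intro k _
    congr 1
    omega
  rw [hz, hx, hIco]
  have h4 : ∀ k ∈ Finset.range d, (i + (k + 1) + 1) * z.getD (i + (k + 1)) 0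
      = (i + k + 1) * z.getD (i + k + 1) 0 + z.getD (i + k + 1) 0 := by
    intro k _
    have e : i + (k + 1) = i + k + 1 := by omega
    rw [e]; ring
  rw [Finset.sum_congr rfl h4, Finset.sum_add_distrib]
  simp only [Nat.add_zero]
  ring

lemma sum_eq_card_forall {s : Finset ℕ} {f : ℕ → ℕ} (hle : ∀ k ∈ s, f k ≤ 1)
    (hsum : ∑ k ∈ s, f k = s.card) : ∀ k ∈ s, f k = 1 := by
  by_contra h
  push_neg at h
  obtain ⟨k, hk, hfk⟩ := h
  have hfk0 : f k = 0 := by have := hle k hk; omega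
  have h1 : ∑ x ∈ s.erase k, f x ≤ (s.erase k).card * 1 := by
    apply Finset.sum_le_card_nsmul
    intro x hx; exact hle x (Finset.mem_of_mem_erase hx)
  have h2 : ∑ x ∈ s, f x = f k + ∑ x ∈ s.erase k, f x := (Finset.add_sum_erase s f hk).symm
  have h3 : (s.erase k).card = s.card - 1 := Finset.card_erase_of_mem hk
  have h4 : 0 < s.card := Finset.card_pos.mpr ⟨k, hk⟩
  omega

lemma key (n : ℕ) (z : List ℕ) (hzlen : z.length = n + 1) (hzbin : ∀ b ∈ z, b ≤ 1)
    (i j : ℕ) (hij : i ≤ j) (hj : j < n + 1)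
    (hsyn : synL (z.eraseIdx i) % (n + 1) = synL (z.eraseIdx j) % (n + 1)) :
    z.eraseIdx i = z.eraseIdx j := by
  rcases eq_or_lt_of_le hij with rfl | hij'
  · rfl
  have hf1 : ∀ k, z.getD k 0 ≤ 1 := by
    intro k
    by_cases hk : k < z.length
    · rw [List.getD_eq_getElem _ _ hk]
      exact hzbin _ (List.getElem_mem hk)
    · rw [List.getD_eq_default _ _ (by omega)]
      omega
  have hiz : i < z.length := by omega
  have hjz : j < z.length := by omega
  have hBi := synB z i hiz
  have hBj := synB z j hjz
  set S : ℕ := ∑ k ∈ Finset.Ico (i + 1) j, z.getD k 0 with hS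
  set T : ℕ := ∑ k ∈ Finset.Ico (j + 1) z.length, z.getD k 0 with hT
  have hsplit : ∑ k ∈ Finset.Ico (i + 1) z.length, z.getD k 0 = (S + z.getD j 0) + T := by
    rw [hS, hT, ← Finset.sum_Ico_succ_top (by omega : i + 1 ≤ j),
      Finset.sum_Ico_consecutive _ (by omega) (by omega)]
  rw [hsplit] at hBi
  have heq : synL (z.eraseIdx i) + (((i + 1) * z.getD i 0 + S) + z.getD j 0) + T
      = synL (z.eraseIdx j) + ((j + 1) * z.getD j 0 + T) := by omega
  -- bounds
  have hSle : S ≤ j - (i + 1) := by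
    calc S = ∑ k ∈ Finset.Ico (i + 1) j, z.getD k 0 := hS
      _ ≤ (Finset.Ico (i + 1) j).card * 1 :=
          Finset.sum_le_card_nsmul _ _ _ (fun x _ => hf1 x)
      _ = j - (i + 1) := by rw [Nat.card_Ico, Nat.mul_one]
  have hfi1 : (i + 1) * z.getD i 0 ≤ i + 1 := by
    calc (i + 1) * z.getD i 0 ≤ (i + 1) * 1 := Nat.mul_le_mul_left _ (hf1 i)
      _ = i + 1 := Nat.mul_one _
  have hAle : (i + 1) * z.getD i 0 + S ≤ j := by omega
  have hjf : j * z.getD j 0 ≤ j := by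
    calc j * z.getD j 0 ≤ j * 1 := Nat.mul_le_mul_left _ (hf1 j)
      _ = j := Nat.mul_one j
  -- modular cancellation
  have hcalc : synL (z.eraseIdx j) + ((((i + 1) * z.getD i 0 + S) + z.getD j 0) + T)
      ≡ synL (z.eraseIdx j) + ((j + 1) * z.getD j 0 + T) [MOD n + 1] := by
    calc synL (z.eraseIdx j) + ((((i + 1) * z.getD i 0 + S) + z.getD j 0) + T)
        ≡ synL (z.eraseIdx i) + ((((i + 1) * z.getD i 0 + S) + z.getD j 0) + T) [MOD n + 1] :=
          Nat.ModEq.add_right _ (Nat.ModEq.symm hsyn)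
      _ = synL (z.eraseIdx j) + ((j + 1) * z.getD j 0 + T) := by omega
  have h2 : ((i + 1) * z.getD i 0 + S) + z.getD j 0 ≡ (j + 1) * z.getD j 0 [MOD n + 1] :=
    Nat.ModEq.add_right_cancel' T (Nat.ModEq.add_left_cancel' _ hcalc)
  have h3 : ((i + 1) * z.getD i 0 + S) + z.getD j 0 ≡ j * z.getD j 0 + z.getD j 0 [MOD n + 1] := by
    have e : (j + 1) * z.getD j 0 = j * z.getD j 0 + z.getD j 0 := by ring
    rw [← e]; exact h2
  have hmod : (i + 1) * z.getD i 0 + S ≡ j * z.getD j 0 [MOD n + 1] :=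
    Nat.ModEq.add_right_cancel' _ h3
  have hAeq : (i + 1) * z.getD i 0 + S = j * z.getD j 0 := by
    have := hmod
    unfold Nat.ModEq at this
    rw [Nat.mod_eq_of_lt (by omega), Nat.mod_eq_of_lt (by omega)] at this
    exact this
  -- constant value on [i, j]
  have hconst : ∀ k, i ≤ k → k ≤ j → z.getD k 0 = z.getD j 0 := by
    rcases Nat.le_one_iff_eq_zero_or_eq_one.mp (hf1 j) with hc | hc
    · rw [hc, Nat.mul_zero] at hAeq
      have hfi : z.getD i 0 = 0 := by
        have h0 : (i + 1) * z.getD i 0 = 0 := by omega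
        simpa using h0
      have hS0 : S = 0 := by omega
      have hall : ∀ k ∈ Finset.Ico (i + 1) j, z.getD k 0 = 0 :=
        Finset.sum_eq_zero_iff.mp (by rw [← hS]; exact hS0)
      intro k hk1 hk2
      rcases eq_or_lt_of_le hk1 with rfl | h1
      · rw [hfi, hc]
      rcases eq_or_lt_of_le hk2 with rfl | h2
      · rfl
      · rw [hall k (Finset.mem_Ico.mpr ⟨by omega, h2⟩), hc]
    · rw [hc, Nat.mul_one] at hAeq
      have hfi : z.getD i 0 = 1 := by
        rcases Nat.le_one_iff_eq_zero_or_eq_one.mp (hf1 i) with h0 | h1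
        · rw [h0, Nat.mul_zero] at hAeq; omega
        · exact h1
      have hScard : ∑ k ∈ Finset.Ico (i + 1) j, z.getD k 0 = (Finset.Ico (i + 1) j).card := by
        rw [← hS, Nat.card_Ico]
        rw [hfi, Nat.mul_one] at hAeq
        omega
      have hall : ∀ k ∈ Finset.Ico (i + 1) j, z.getD k 0 = 1 :=
        sum_eq_card_forall (fun k _ => hf1 k) hScard
      intro k hk1 hk2
      rcases eq_or_lt_of_le hk1 with rfl | h1
      · rw [hfi, hc]
      rcases eq_or_lt_of_le hk2 with rfl | h2
      · rfl
      · rw [hall k (Finset.mem_Ico.mpr ⟨by omega, h2⟩), hc]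
  -- conclude lists equal
  have hleni : (z.eraseIdx i).length = n := by rw [List.length_eraseIdx]; simp [hiz]; omega
  have hlenj : (z.eraseIdx j).length = n := by rw [List.length_eraseIdx]; simp [hjz]; omega
  apply List.ext_getElem (by omega)
  intro k hk1 hk2
  have e1 : (z.eraseIdx i)[k] = (z.eraseIdx i).getD k 0 := (List.getD_eq_getElem _ _ hk1).symm
  have e2 : (z.eraseIdx j)[k] = (z.eraseIdx j).getD k 0 := (List.getD_eq_getElem _ _ hk2).symm
  rw [e1, e2, getD_eraseIdx z i hiz k, getD_eraseIdx z j hjz k]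
  by_cases h1 : k < i
  · rw [if_pos h1, if_pos (by omega)]
  by_cases h2 : k < j
  · rw [if_neg h1, if_pos h2]
    have ha : z.getD (k + 1) 0 = z.getD j 0 := hconst (k + 1) (by omega) (by omega)
    have hb : z.getD k 0 = z.getD j 0 := hconst k (by omega) (by omega)
    rw [ha, hb]
  · rw [if_neg h1, if_neg h2]

theorem stmt_1 (n : ℕ) (hn : 1 ≤ n) (a : ℕ) (ha : a < n + 1)
    (x x' : List ℕ)
    (hxlen : x.length = n) (hxbin : ∀ b ∈ x, b ≤ 1) (hxsyn : synL x % (n + 1) = a)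
    (hx'len : x'.length = n) (hx'bin : ∀ b ∈ x', b ≤ 1) (hx'syn : synL x' % (n + 1) = a)
    (hne : x ≠ x') :
    ¬ ∃ z : List ℕ, z.length = n + 1 ∧ (∀ b ∈ z, b ≤ 1) ∧
        (∃ i < n + 1, z.eraseIdx i = x) ∧ (∃ i < n + 1, z.eraseIdx i = x') := by
  rintro ⟨z, hzlen, hzbin, ⟨i, hi, hiz⟩, ⟨j, hj, hjz⟩⟩
  apply hne
  rcases le_total i j with hij | hij
  · rw [← hiz, ← hjz]
    exact key n z hzlen hzbin i j hij hj (by rw [hiz, hjz, hxsyn, hx'syn])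
  · rw [← hiz, ← hjz]
    exact (key n z hzlen hzbin j i hij hi (by rw [hiz, hjz, hxsyn, hx'syn])).symm
end

section
/- Let q ≥ 2, n ≥ 2, x ∈ Σ_q^n, let y = Diff(x), and let 2 ≤ i ≤ n. If x' ∈ Σ_q^{n-1} is obtained from x by deleting coordinate x_i, then Diff(x') = y_1 … y_{i-2} w y_{i+1} … y_n, where w = y_{i-1} + y_i (mod q); i.e., Diff(x') is obtained from Diff(x) by replacing the adjacent pair y_{i-1} y_i with the single symbol y_{i-1} + y_i (mod q). -/
/-- Differential vector: `Diff(x)_i = x_i - x_{i+1} (mod q)` for `i < n`, `Diff(x)_n = x_n`. -/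
def diffL (q : ℕ) (x : List ℕ) : List ℕ :=
  List.ofFn fun i : Fin x.length =>
    if i.1 + 1 < x.length then
      (((x.getD i.1 0 : ℤ) - (x.getD (i.1 + 1) 0 : ℤ)) % (q : ℤ)).toNat
    else x.getD i.1 0

lemma diffL_length (q : ℕ) (x : List ℕ) : (diffL q x).length = x.length := by
  simp [diffL]

lemma diffL_getElem (q : ℕ) (x : List ℕ) (j : ℕ) (h : j < (diffL q x).length) :
    (diffL q x)[j] =
      if j + 1 < x.length then
        (((x.getD j 0 : ℤ) - (x.getD (j + 1) 0 : ℤ)) % (q : ℤ)).toNat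
      else x.getD j 0 := by
  simp only [diffL, List.getElem_ofFn]

lemma getD_eraseIdx_s7 (x : List ℕ) (p k : ℕ) (hk : k < (x.eraseIdx p).length) :
    (x.eraseIdx p).getD k 0 = if k < p then x.getD k 0 else x.getD (k + 1) 0 := by
  have hl := (List.length_eraseIdx : (x.eraseIdx p).length = _)
  have hkx : k < x.length := by
    by_cases hp : p < x.length <;> simp [hp] at hl <;> omega
  rw [List.getD_eq_getElem _ _ hk, List.getElem_eraseIdx]
  by_cases h : k < p
  · rw [dif_pos h, if_pos h, List.getD_eq_getElem _ _ hkx]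
  · have hk1 : k + 1 < x.length := by
      by_cases hp : p < x.length <;> simp [hp] at hl <;> omega
    rw [dif_neg h, if_neg h, List.getD_eq_getElem _ _ hk1]

lemma key1 (q a b c : ℕ) (hq : 0 < q) :
    ((((a : ℤ) - b) % q).toNat + (((b : ℤ) - c) % q).toNat) % q
      = (((a : ℤ) - c) % q).toNat := by
  have hq' : (q : ℤ) ≠ 0 := by exact_mod_cast hq.ne'
  have h1 : (0:ℤ) ≤ ((a : ℤ) - b) % q := Int.emod_nonneg _ hq'
  have h2 : (0:ℤ) ≤ ((b : ℤ) - c) % q := Int.emod_nonneg _ hq'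
  have h3 : (0:ℤ) ≤ ((a : ℤ) - c) % q := Int.emod_nonneg _ hq'
  zify
  rw [Int.toNat_of_nonneg h1, Int.toNat_of_nonneg h2, Int.toNat_of_nonneg h3,
    ← Int.add_emod]
  ring_nf

lemma key2 (q a b : ℕ) (hq : 0 < q) (ha : a < q) (_hb : b < q) :
    ((((a : ℤ) - b) % q).toNat + b) % q = a := by
  have hq' : (q : ℤ) ≠ 0 := by exact_mod_cast hq.ne'
  have h1 : (0:ℤ) ≤ ((a : ℤ) - b) % q := Int.emod_nonneg _ hq'
  zify
  rw [Int.toNat_of_nonneg h1, Int.add_emod, Int.emod_emod_of_dvd _ dvd_rfl,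
    ← Int.add_emod]
  have : (a : ℤ) - b + b = a := by ring
  rw [this]
  exact Int.emod_eq_of_lt (by positivity) (by exact_mod_cast ha)

/-- Deleting the (1-indexed) coordinate `i`, `2 ≤ i ≤ n`, of `x` replaces the adjacent
pair `y_{i-1} y_i` of `y = Diff(x)` by the single symbol `y_{i-1} + y_i (mod q)`. -/
theorem stmt_7 (q n i : ℕ) (hq : 2 ≤ q) (hn : 2 ≤ n) (hi1 : 2 ≤ i) (hi2 : i ≤ n)
    (x : List ℕ) (hlen : x.length = n) (hx : ∀ b ∈ x, b < q)
    (x' : List ℕ) (hdel : x' = x.eraseIdx (i - 1)) :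
    diffL q x' =
      (diffL q x).take (i - 2) ++
        [((diffL q x).getD (i - 2) 0 + (diffL q x).getD (i - 1) 0) % q] ++
        (diffL q x).drop i := by
  subst hdel
  have hq0 : 0 < q := by omega
  have hE : (x.eraseIdx (i - 1)).length = n - 1 := by
    rw [List.length_eraseIdx]; simp [hlen]; omega
  have hbd : ∀ k, (hk : k < x.length) → x.getD k 0 < q := by
    intro k hk
    rw [List.getD_eq_getElem _ _ hk]
    exact hx _ (List.getElem_mem _)
  apply List.ext_getElem
  · simp [diffL_length, hE, hlen]
    omega
  · intro j h1 h2
    have hj : j < n - 1 := by rwa [diffL_length, hE] at h1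
    rw [diffL_getElem _ _ _ h1]
    simp only [List.getElem_append]
    have hta : ((diffL q x).take (i - 2)).length = i - 2 := by
      simp [diffL_length, hlen]; omega
    have hAl : ((diffL q x).take (i - 2) ++
        [((diffL q x).getD (i - 2) 0 + (diffL q x).getD (i - 1) 0) % q]).length = i - 1 := by
      simp [hta]; omega
    rcases lt_trichotomy j (i - 2) with hc | hc | hc
    · -- j < i - 2
      rw [if_pos (by rw [hE]; omega)]
      rw [getD_eraseIdx_s7 _ _ _ (by omega), getD_eraseIdx_s7 _ _ _ (by omega),
        if_pos (by omega), if_pos (by omega)]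
      rw [dif_pos (by rw [hAl]; omega), dif_pos (by rw [hta]; omega)]
      rw [List.getElem_take, diffL_getElem _ _ _ (by rw [diffL_length]; omega),
        if_pos (by omega)]
    · -- j = i - 2
      subst hc
      rw [dif_pos (by rw [hAl]; omega), dif_neg (by rw [hta]; omega)]
      simp only [List.getElem_singleton]
      rw [List.getD_eq_getElem (diffL q x) 0 (n := i - 2) (by rw [diffL_length]; omega),
        List.getD_eq_getElem (diffL q x) 0 (n := i - 1) (by rw [diffL_length]; omega),
        diffL_getElem _ _ _ (by rw [diffL_length]; omega),
        diffL_getElem _ _ _ (by rw [diffL_length]; omega)]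
      rw [show i - 2 + 1 = i - 1 from by omega]
      rw [if_pos (show i - 1 < x.length from by omega)]
      by_cases hin : i < n
      · rw [if_pos (show i - 1 < (x.eraseIdx (i - 1)).length from by omega),
          if_pos (show i - 1 + 1 < x.length from by omega),
          getD_eraseIdx_s7 _ _ _ (by omega), getD_eraseIdx_s7 _ _ _ (by omega),
          if_pos (show i - 2 < i - 1 from by omega),
          if_neg (show ¬ i - 1 < i - 1 from by omega),
          show i - 1 + 1 = i from by omega]
        exact (key1 q _ _ _ hq0).symm
      · -- i = n
        rw [if_neg (show ¬ i - 1 < (x.eraseIdx (i - 1)).length from by omega),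
          if_neg (show ¬ i - 1 + 1 < x.length from by omega),
          getD_eraseIdx_s7 _ _ _ (by omega),
          if_pos (show i - 2 < i - 1 from by omega)]
        exact (key2 q _ _ hq0 (hbd _ (by omega)) (hbd _ (by omega))).symm
    · -- j > i - 2
      rw [dif_neg (by rw [hAl]; omega)]
      simp only [hAl]
      rw [List.getElem_drop, diffL_getElem _ _ _ (by rw [diffL_length, hlen]; omega)]
      rw [show i + (j - (i - 1)) = j + 1 from by omega]
      by_cases hjn : j + 1 < n - 1
      · rw [if_pos (show j + 1 < (x.eraseIdx (i - 1)).length from by omega),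
          if_pos (show j + 1 + 1 < x.length from by omega),
          getD_eraseIdx_s7 _ _ _ (by omega), getD_eraseIdx_s7 _ _ _ (by omega),
          if_neg (show ¬ j < i - 1 from by omega),
          if_neg (show ¬ j + 1 < i - 1 from by omega)]
      · rw [if_neg (show ¬ j + 1 < (x.eraseIdx (i - 1)).length from by omega),
          if_neg (show ¬ j + 1 + 1 < x.length from by omega),
          getD_eraseIdx_s7 _ _ _ (by omega),
          if_neg (show ¬ j < i - 1 from by omega)]
end

section
/- Let q ≥ 2, n ≥ 1, a ∈ ℤ_{qn}, and let VT*_a(n;q) = {x ∈ Σ_q^n : Syn(Diff(x)) ≡ a (mod qn)}. Then VT*_a(n;q) corrects a single deletion: for any two distinct codewords x, x̃ ∈ VT*_a(n;q), no sequence z ∈ Σ_q^{n-1} can be obtained both from x by deleting one coordinate and from x̃ by deleting one coordinate. -/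
def indI (P : Prop) [Decidable P] : ℤ := if P then 1 else 0

lemma indI_bit (P : Prop) [Decidable P] : indI P = 0 ∨ indI P = 1 := by
  unfold indI; split <;> simp

lemma indI_nonneg (P : Prop) [Decidable P] : 0 ≤ indI P := by
  unfold indI; split <;> simp

lemma indI_le_one (P : Prop) [Decidable P] : indI P ≤ 1 := by
  unfold indI; split <;> simp

lemma indI_eq_one_iff {P : Prop} [Decidable P] : indI P = 1 ↔ P := by
  unfold indI; split <;> simp_all

lemma indI_eq_zero_iff {P : Prop} [Decidable P] : indI P = 0 ↔ ¬P := by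
  unfold indI; split <;> simp_all

def Wf (L : ℕ) (Z : ℕ → ℤ) : ℤ := ∑ j ∈ Finset.range L, ((j : ℤ) + 1) * indI (Z j < Z (j + 1))

lemma telescope (X : ℕ → ℤ) (m : ℕ) :
    (∑ i ∈ Finset.range m, ((i : ℤ) + 1) * (X i - X (i + 1))) + ((m : ℤ) + 1) * X m
      = ∑ i ∈ Finset.range (m + 1), X i := by
  induction m with
  | zero => simp
  | succ k ih =>
      rw [Finset.sum_range_succ, Finset.sum_range_succ (f := X)]
      push_cast
      push_cast at ih
      nlinarith [ih]

lemma diffL_getD (q : ℕ) (x : List ℕ) (i : ℕ) (h : i < x.length) :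
    (diffL q x).getD i 0 =
      if i + 1 < x.length then (((x.getD i 0 : ℤ) - (x.getD (i + 1) 0 : ℤ)) % (q : ℤ)).toNat
      else x.getD i 0 := by
  have hlen : (diffL q x).length = x.length := by simp [diffL]
  rw [List.getD_eq_getElem _ _ (by omega)]
  simp only [diffL, List.getElem_ofFn, Fin.cast_mk]

lemma emod_eq (q : ℕ) (hq : 1 ≤ q) (u v : ℤ) (hu : 0 ≤ u) (hu2 : u < q) (hv : 0 ≤ v)
    (hv2 : v < q) :
    (u - v) % (q : ℤ) = u - v + (q : ℤ) * indI (u < v) := by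
  rcases lt_or_ge u v with h | h
  · rw [indI_eq_one_iff.mpr h]
    have h2 : (u - v) % (q : ℤ) = (u - v + (q : ℤ) * 1) % (q : ℤ) :=
      (Int.add_mul_emod_self_left (u - v) (q : ℤ) 1).symm
    rw [h2, mul_one, Int.emod_eq_of_lt (by omega) (by omega)]
  · rw [indI_eq_zero_iff.mpr (by omega)]
    rw [Int.emod_eq_of_lt (by omega) (by omega)]
    ring

lemma synd_eq (q : ℕ) (hq : 1 ≤ q) (x : List ℕ) (hx : ∀ b ∈ x, b < q) :
    (synL (diffL q x) : ℤ) =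
      (∑ j ∈ Finset.range x.length, (x.getD j 0 : ℤ))
        + (q : ℤ) * Wf (x.length - 1) (fun j => (x.getD j 0 : ℤ)) := by
  have hlen : (diffL q x).length = x.length := by simp [diffL]
  have hX0 : ∀ j : ℕ, (0 : ℤ) ≤ (x.getD j 0 : ℤ) := fun j => Int.natCast_nonneg _
  have hXq : ∀ j, j < x.length → ((x.getD j 0 : ℤ)) < q := by
    intro j hj
    rw [List.getD_eq_getElem _ _ hj]
    exact_mod_cast hx _ (List.getElem_mem _)
  rcases Nat.eq_zero_or_pos x.length with h0 | hpos
  · unfold synL Wf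
    rw [hlen, h0]
    simp [h0]
  obtain ⟨m, hm⟩ : ∃ m, x.length = m + 1 := ⟨x.length - 1, by omega⟩
  have key : ∀ i, i < m + 1 → ((diffL q x).getD i 0 : ℤ) =
      (if i + 1 < m + 1 then
        ((x.getD i 0 : ℤ) - (x.getD (i + 1) 0 : ℤ)
          + (q : ℤ) * indI ((x.getD i 0 : ℤ) < (x.getD (i + 1) 0 : ℤ)))
      else (x.getD i 0 : ℤ)) := by
    intro i hi
    rw [diffL_getD q x i (by omega), hm]
    by_cases h2 : i + 1 < m + 1
    · rw [if_pos h2, if_pos h2]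
      rw [Int.toNat_of_nonneg (Int.emod_nonneg _ (by exact_mod_cast by omega))]
      exact emod_eq q hq _ _ (hX0 i) (hXq i (by omega)) (hX0 (i + 1)) (hXq (i + 1) (by omega))
    · rw [if_neg h2, if_neg h2]
  unfold synL
  rw [hlen, hm]
  push_cast
  calc (∑ i ∈ Finset.range (m + 1), ((i : ℤ) + 1) * ((diffL q x).getD i 0 : ℤ))
      = ∑ i ∈ Finset.range (m + 1), ((i : ℤ) + 1) *
          (if i + 1 < m + 1 then
            ((x.getD i 0 : ℤ) - (x.getD (i + 1) 0 : ℤ)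
              + (q : ℤ) * indI ((x.getD i 0 : ℤ) < (x.getD (i + 1) 0 : ℤ)))
          else (x.getD i 0 : ℤ)) := by
        apply Finset.sum_congr rfl
        intro i hi
        rw [key i (Finset.mem_range.mp hi)]
    _ = (∑ i ∈ Finset.range m, ((i : ℤ) + 1) *
          ((x.getD i 0 : ℤ) - (x.getD (i + 1) 0 : ℤ)))
        + (q : ℤ) * (∑ i ∈ Finset.range m, ((i : ℤ) + 1) *
            indI ((x.getD i 0 : ℤ) < (x.getD (i + 1) 0 : ℤ)))
        + ((m : ℤ) + 1) * (x.getD m 0 : ℤ) := by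
        rw [Finset.sum_range_succ, if_neg (by omega)]
        rw [Finset.mul_sum]
        rw [← Finset.sum_add_distrib]
        congr 1
        apply Finset.sum_congr rfl
        intro i hi
        rw [if_pos (by have := Finset.mem_range.mp hi; omega)]
        ring
    _ = (∑ j ∈ Finset.range (m + 1), (x.getD j 0 : ℤ))
        + (q : ℤ) * Wf (m + 1 - 1) (fun j => (x.getD j 0 : ℤ)) := by
        rw [← telescope (fun j => (x.getD j 0 : ℤ)) m]
        unfold Wf
        simp only [Nat.add_sub_cancel]
        ring

lemma ico_shift (a b : ℕ) (f : ℕ → ℤ) :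
    ∑ j ∈ Finset.Ico (a + 1) (b + 1), f j = ∑ j ∈ Finset.Ico a b, f (j + 1) := by
  rw [Finset.sum_Ico_eq_sum_range, Finset.sum_Ico_eq_sum_range]
  have h : b + 1 - (a + 1) = b - a := by omega
  rw [h]
  apply Finset.sum_congr rfl
  intro k _
  congr 1
  omega

lemma sum_insert_fn (L i : ℕ) (hi : i ≤ L) (Z X : ℕ → ℤ) (s : ℤ)
    (hX : ∀ j, X j = if j < i then Z j else if j = i then s else Z (j - 1)) :
    ∑ j ∈ Finset.range (L + 1), X j = s + ∑ j ∈ Finset.range L, Z j := by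
  rw [Finset.range_eq_Ico, Finset.range_eq_Ico,
    ← Finset.sum_Ico_consecutive _ (Nat.zero_le i) (by omega : i ≤ L + 1),
    ← Finset.sum_Ico_consecutive _ (Nat.zero_le i) (by omega : i ≤ L),
    Finset.sum_eq_sum_Ico_succ_bot (by omega : i < L + 1)]
  have h1 : ∑ j ∈ Finset.Ico 0 i, X j = ∑ j ∈ Finset.Ico 0 i, Z j := by
    apply Finset.sum_congr rfl
    intro j hj
    rw [hX j, if_pos (Finset.mem_Ico.mp hj).2]
  have h2 : X i = s := by rw [hX i, if_neg (by omega), if_pos rfl]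
  have h3 : ∑ j ∈ Finset.Ico (i + 1) (L + 1), X j = ∑ j ∈ Finset.Ico i L, Z j := by
    rw [ico_shift]
    apply Finset.sum_congr rfl
    intro j hj
    have hj2 := Finset.mem_Ico.mp hj
    rw [hX (j + 1), if_neg (by omega), if_neg (by omega)]
    congr 1
  rw [h1, h2, h3]
  ring

lemma Wf_insert (L i : ℕ) (hi : i ≤ L) (Z X : ℕ → ℤ) (s : ℤ) (hs : 0 ≤ s)
    (hZpos : ∀ j, 0 ≤ Z j) (hZ0 : ∀ j, L ≤ j → Z j = 0)
    (hX : ∀ j, X j = if j < i then Z j else if j = i then s else Z (j - 1)) :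
    Wf L X = Wf (L - 1) Z + (i : ℤ) * indI (Z (i - 1) < s) + ((i : ℤ) + 1) * indI (s < Z i)
      - (i : ℤ) * indI (Z (i - 1) < Z i)
      + ∑ j ∈ Finset.Ico i L, indI (Z j < Z (j + 1)) := by
  have hXlt : ∀ j, j < i → X j = Z j := fun j hj => by rw [hX j, if_pos hj]
  have hXi : X i = s := by rw [hX i]; simp
  have hXgt : ∀ j, i < j → X j = Z (j - 1) := fun j hj => by
    rw [hX j, if_neg (by omega), if_neg (by omega)]
  rcases eq_or_lt_of_le hi with rfl | hiL
  · -- i = L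
    rcases Nat.eq_zero_or_pos i with rfl | hpos
    · have h1 : indI (s < Z 0) = 0 := by
        rw [indI_eq_zero_iff, hZ0 0 le_rfl]; omega
      have h2 : indI (Z 0 < Z 0) = 0 := by rw [indI_eq_zero_iff]; omega
      unfold Wf
      simp [h1, h2]
    · obtain ⟨M, rfl⟩ : ∃ M, i = M + 1 := ⟨i - 1, by omega⟩
      unfold Wf
      rw [Finset.sum_range_succ]
      have h1 : ∑ j ∈ Finset.range M, ((j : ℤ) + 1) * indI (X j < X (j + 1))
          = ∑ j ∈ Finset.range M, ((j : ℤ) + 1) * indI (Z j < Z (j + 1)) := by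
        apply Finset.sum_congr rfl
        intro j hj
        have hj2 := Finset.mem_range.mp hj
        rw [hXlt j (by omega), hXlt (j + 1) (by omega)]
      have h2 : X M = Z M := hXlt M (by omega)
      have h3 : X (M + 1) = s := hXi
      have h4 : indI (s < Z (M + 1)) = 0 := by
        rw [indI_eq_zero_iff, hZ0 (M + 1) le_rfl]; omega
      have h5 : indI (Z M < Z (M + 1)) = 0 := by
        rw [indI_eq_zero_iff, hZ0 (M + 1) le_rfl]
        have := hZpos M; omega
      rw [h1, h2, h3]
      simp only [Nat.add_sub_cancel, Finset.Ico_self, Finset.sum_empty]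
      rw [h4, h5]
      push_cast
      ring
  · -- i < L
    obtain ⟨M, rfl⟩ : ∃ M, L = M + 1 := ⟨L - 1, by omega⟩
    unfold Wf
    simp only [Nat.add_sub_cancel]
    rw [Finset.range_eq_Ico, Finset.range_eq_Ico,
      ← Finset.sum_Ico_consecutive _ (Nat.zero_le i) (by omega : i ≤ M + 1),
      Finset.sum_eq_sum_Ico_succ_bot (by omega : i < M + 1)]
    have hFi : ((i : ℤ) + 1) * indI (X i < X (i + 1)) = ((i : ℤ) + 1) * indI (s < Z i) := by
      rw [hXi, hXgt (i + 1) (by omega)]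
      simp only [Nat.add_sub_cancel]
    have hupper : ∑ j ∈ Finset.Ico (i + 1) (M + 1), ((j : ℤ) + 1) * indI (X j < X (j + 1))
        = (∑ j ∈ Finset.Ico i M, ((j : ℤ) + 1) * indI (Z j < Z (j + 1)))
          + ∑ j ∈ Finset.Ico i M, indI (Z j < Z (j + 1)) := by
      rw [ico_shift, ← Finset.sum_add_distrib]
      apply Finset.sum_congr rfl
      intro j hj
      have hj2 := Finset.mem_Ico.mp hj
      rw [hXgt (j + 1) (by omega), hXgt (j + 1 + 1) (by omega)]
      simp only [Nat.add_sub_cancel]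
      push_cast
      ring
    have hdelta : ∑ j ∈ Finset.Ico i (M + 1), indI (Z j < Z (j + 1))
        = ∑ j ∈ Finset.Ico i M, indI (Z j < Z (j + 1)) := by
      rw [Finset.sum_Ico_succ_top (by omega : i ≤ M)]
      have h6 : indI (Z M < Z (M + 1)) = 0 := by
        rw [indI_eq_zero_iff, hZ0 (M + 1) (by omega)]
        have := hZpos M; omega
      rw [h6, add_zero]
    rcases Nat.eq_zero_or_pos i with rfl | hpos
    · simp only [Finset.Ico_self, Finset.sum_empty, zero_add]
      rw [hFi, hupper, hdelta]
      push_cast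
      ring
    · obtain ⟨K, rfl⟩ : ∃ K, i = K + 1 := ⟨i - 1, by omega⟩
      rw [Finset.sum_Ico_succ_top (Nat.zero_le K)]
      have hlow : ∑ j ∈ Finset.Ico 0 K, ((j : ℤ) + 1) * indI (X j < X (j + 1))
          = ∑ j ∈ Finset.Ico 0 K, ((j : ℤ) + 1) * indI (Z j < Z (j + 1)) := by
        apply Finset.sum_congr rfl
        intro j hj
        have hj2 := Finset.mem_Ico.mp hj
        rw [hXlt j (by omega), hXlt (j + 1) (by omega)]
      have hbK : ((K : ℤ) + 1) * indI (X K < X (K + 1)) = ((K : ℤ) + 1) * indI (Z K < s) := by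
        rw [hXlt K (by omega), hXi]
      have hWZ : ∑ j ∈ Finset.Ico 0 M, ((j : ℤ) + 1) * indI (Z j < Z (j + 1))
          = (∑ j ∈ Finset.Ico 0 K, ((j : ℤ) + 1) * indI (Z j < Z (j + 1)))
            + ((K : ℤ) + 1) * indI (Z K < Z (K + 1))
            + ∑ j ∈ Finset.Ico (K + 1) M, ((j : ℤ) + 1) * indI (Z j < Z (j + 1)) := by
        rw [← Finset.sum_Ico_consecutive _ (Nat.zero_le (K + 1)) (by omega : K + 1 ≤ M),
          Finset.sum_Ico_succ_top (Nat.zero_le K)]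
      rw [hFi, hupper, hdelta, hlow, hbK, hWZ]
      simp only [Nat.add_sub_cancel]
      push_cast
      ring

lemma sum_bits_nonneg (a b : ℕ) (f : ℕ → ℤ) (hf : ∀ j, 0 ≤ f j) :
    0 ≤ ∑ j ∈ Finset.Ico a b, f j :=
  Finset.sum_nonneg fun j _ => hf j

lemma sum_bits_le (a b : ℕ) (hab : a ≤ b) (f : ℕ → ℤ) (hf : ∀ j, f j ≤ 1) :
    ∑ j ∈ Finset.Ico a b, f j ≤ (b : ℤ) - a := by
  calc ∑ j ∈ Finset.Ico a b, f j ≤ ∑ _j ∈ Finset.Ico a b, (1 : ℤ) :=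
        Finset.sum_le_sum fun j _ => hf j
    _ = ((b - a : ℕ) : ℤ) := by rw [Finset.sum_const, Nat.card_Ico]; simp
    _ = (b : ℤ) - a := by omega

lemma G_bound_abs (L i : ℕ) (A C D R : ℤ)
    (hA : A = 0 ∨ A = 1) (hC : C = 0 ∨ C = 1) (hD : D = 0 ∨ D = 1)
    (hR0 : 0 ≤ R) (hRle : R ≤ (L : ℤ) - i)
    (hRle2 : C = 1 → R ≤ (L : ℤ) - 1 - i)
    (hex1 : ¬(A = 0 ∧ C = 0 ∧ D = 1)) (hex2 : ¬(A = 1 ∧ C = 1 ∧ D = 0)) :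
    0 ≤ (i : ℤ) * A + ((i : ℤ) + 1) * C - (i : ℤ) * D + R
      ∧ (i : ℤ) * A + ((i : ℤ) + 1) * C - (i : ℤ) * D + R ≤ (L : ℤ) := by
  have hi0 : (0 : ℤ) ≤ (i : ℤ) := Int.natCast_nonneg i
  rcases hA with rfl | rfl <;> rcases hC with rfl | rfl <;> rcases hD with rfl | rfl
  · constructor <;> linarith
  · exact absurd ⟨rfl, rfl, rfl⟩ hex1
  · have := hRle2 rfl; constructor <;> linarith
  · have := hRle2 rfl; constructor <;> linarith
  · constructor <;> linarith
  · constructor <;> linarith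
  · exact absurd ⟨rfl, rfl, rfl⟩ hex2
  · have := hRle2 rfl; constructor <;> linarith

lemma G_bound (L i : ℕ) (hi : i ≤ L) (Z : ℕ → ℤ) (s : ℤ) (hs : 0 ≤ s)
    (hZpos : ∀ j, 0 ≤ Z j) (hZ0 : ∀ j, L ≤ j → Z j = 0) :
    0 ≤ (i : ℤ) * indI (Z (i - 1) < s) + ((i : ℤ) + 1) * indI (s < Z i)
        - (i : ℤ) * indI (Z (i - 1) < Z i) + (∑ j ∈ Finset.Ico i L, indI (Z j < Z (j + 1)))
      ∧ (i : ℤ) * indI (Z (i - 1) < s) + ((i : ℤ) + 1) * indI (s < Z i)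
        - (i : ℤ) * indI (Z (i - 1) < Z i) + (∑ j ∈ Finset.Ico i L, indI (Z j < Z (j + 1)))
        ≤ (L : ℤ) := by
  apply G_bound_abs L i _ _ _ _ (indI_bit _) (indI_bit _) (indI_bit _)
  · exact sum_bits_nonneg _ _ _ fun j => indI_nonneg _
  · exact sum_bits_le _ _ hi _ fun j => indI_le_one _
  · intro hC1
    have hc : s < Z i := indI_eq_one_iff.mp hC1
    have hiL : i < L := by
      by_contra h
      have : Z i = 0 := hZ0 i (by omega)
      omega
    have hsum : (∑ j ∈ Finset.Ico i L, indI (Z j < Z (j + 1)))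
        = ∑ j ∈ Finset.Ico i (L - 1 + 1), indI (Z j < Z (j + 1)) :=
      Finset.sum_congr (by rw [show L - 1 + 1 = L from by omega]) (fun _ _ => rfl)
    have hz : indI (Z (L - 1) < Z (L - 1 + 1)) = 0 := by
      rw [indI_eq_zero_iff, show L - 1 + 1 = L from by omega, hZ0 L le_rfl]
      have := hZpos (L - 1); omega
    rw [hsum, Finset.sum_Ico_succ_top (by omega : i ≤ L - 1), hz, add_zero]
    have hle := sum_bits_le i (L - 1) (by omega) _ (fun j => indI_le_one (Z j < Z (j + 1)))
    have hcast : ((L - 1 : ℕ) : ℤ) = (L : ℤ) - 1 := by omega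
    linarith
  · rintro ⟨e1, e2, e3⟩
    have h1 := indI_eq_zero_iff.mp e1
    have h2 := indI_eq_zero_iff.mp e2
    have h3 := indI_eq_one_iff.mp e3
    omega
  · rintro ⟨e1, e2, e3⟩
    have h1 := indI_eq_one_iff.mp e1
    have h2 := indI_eq_one_iff.mp e2
    have h3 := indI_eq_zero_iff.mp e3
    omega

lemma vt_sub (L p p' : ℕ) (hpp : p ≤ p') (hp'L : p' ≤ L) (δ : ℕ → ℤ)
    (hδ : ∀ j, δ j = 0 ∨ δ j = 1) (b b' : ℤ)
    (hb : b = 0 ∨ b = 1) (hb' : b' = 0 ∨ b' = 1)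
    (e : ((p : ℤ) + 1) * b + ∑ j ∈ Finset.Ico p L, δ j
       = ((p' : ℤ) + 1) * b' + ∑ j ∈ Finset.Ico p' L, δ j) :
    b = b' ∧ ∀ j, p ≤ j → j < p' → δ j = b := by
  have hδ0 : ∀ j, 0 ≤ δ j := fun j => by rcases hδ j with h | h <;> omega
  have hδ1 : ∀ j, δ j ≤ 1 := fun j => by rcases hδ j with h | h <;> omega
  have hsplit : ∑ j ∈ Finset.Ico p L, δ j
      = (∑ j ∈ Finset.Ico p p', δ j) + ∑ j ∈ Finset.Ico p' L, δ j :=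
    (Finset.sum_Ico_consecutive _ hpp hp'L).symm
  have e2 : ((p : ℤ) + 1) * b + ∑ j ∈ Finset.Ico p p', δ j = ((p' : ℤ) + 1) * b' := by
    rw [hsplit] at e; linarith
  have hT0 : 0 ≤ ∑ j ∈ Finset.Ico p p', δ j := sum_bits_nonneg _ _ _ hδ0
  have hT1 : ∑ j ∈ Finset.Ico p p', δ j ≤ (p' : ℤ) - p := sum_bits_le _ _ hpp _ hδ1
  have hp0 : (0 : ℤ) ≤ (p : ℤ) := Int.natCast_nonneg p
  rcases hb with rfl | rfl <;> rcases hb' with rfl | rfl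
  · refine ⟨rfl, ?_⟩
    have hzero : ∑ j ∈ Finset.Ico p p', δ j = 0 := by linarith
    intro j hj1 hj2
    have := (Finset.sum_eq_zero_iff_of_nonneg (fun j _ => hδ0 j)).mp hzero j
      (Finset.mem_Ico.mpr ⟨hj1, hj2⟩)
    exact this
  · exfalso; linarith
  · exfalso; linarith
  · refine ⟨rfl, ?_⟩
    have hsum : ∑ j ∈ Finset.Ico p p', δ j = (p' : ℤ) - p := by linarith
    have hones : ∑ j ∈ Finset.Ico p p', (1 - δ j) = 0 := by
      rw [Finset.sum_sub_distrib, Finset.sum_const, Nat.card_Ico, hsum]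
      have : ((p' - p : ℕ) : ℤ) = (p' : ℤ) - p := by omega
      simp [this]
    intro j hj1 hj2
    have := (Finset.sum_eq_zero_iff_of_nonneg (fun j _ => by have := hδ1 j; omega)).mp hones j
      (Finset.mem_Ico.mpr ⟨hj1, hj2⟩)
    omega

lemma key_s13 (L i i' : ℕ) (h1 : i < i') (h2 : i' ≤ L) (δ : ℕ → ℤ)
    (hδ : ∀ j, δ j = 0 ∨ δ j = 1)
    (A C A' C' : ℤ)
    (hA : A = 0 ∨ A = 1) (hC : C = 0 ∨ C = 1) (hA' : A' = 0 ∨ A' = 1) (hC' : C' = 0 ∨ C' = 1)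
    (hex1 : 1 ≤ i → ¬(A = 0 ∧ C = 0 ∧ δ (i - 1) = 1))
    (hex2 : 1 ≤ i → ¬(A = 1 ∧ C = 1 ∧ δ (i - 1) = 0))
    (hex1' : ¬(A' = 0 ∧ C' = 0 ∧ δ (i' - 1) = 1))
    (hex2' : ¬(A' = 1 ∧ C' = 1 ∧ δ (i' - 1) = 0))
    (e : (i : ℤ) * A + ((i : ℤ) + 1) * C - (i : ℤ) * δ (i - 1) + ∑ j ∈ Finset.Ico i L, δ j
       = (i' : ℤ) * A' + ((i' : ℤ) + 1) * C' - (i' : ℤ) * δ (i' - 1)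
         + ∑ j ∈ Finset.Ico i' L, δ j) :
    C = A' ∧ ∀ j, i ≤ j → j + 1 < i' → δ j = C := by
  have hi'1 : 1 ≤ i' := by omega
  -- Left side normalization
  have hL : (i = 0 ∨ A = δ (i - 1)) ∨ (1 ≤ i ∧ A ≠ δ (i - 1)) := by
    by_cases h : A = δ (i - 1)
    · exact Or.inl (Or.inr h)
    · rcases Nat.eq_zero_or_pos i with h0 | h0
      · exact Or.inl (Or.inl h0)
      · exact Or.inr ⟨h0, h⟩
  -- Right side normalization
  have hR : (A' = δ (i' - 1)) ∨ (A' ≠ δ (i' - 1)) := em _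
  rcases hL with hL1 | ⟨hi1, hL2⟩
  · -- p = i, b = C
    have eL : (i : ℤ) * A + ((i : ℤ) + 1) * C - (i : ℤ) * δ (i - 1)
        + (∑ j ∈ Finset.Ico i L, δ j)
        = ((i : ℤ) + 1) * C + ∑ j ∈ Finset.Ico i L, δ j := by
      rcases hL1 with h0 | h0
      · subst h0; push_cast; ring
      · rw [h0]; ring
    rcases hR with hR1 | hR2
    · -- p' = i', b' = C'
      have esub := vt_sub L i i' (by omega) h2 δ hδ C C' hC hC' (by rw [← eL, e, hR1]; ring)
      obtain ⟨hbb, hconst⟩ := esub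
      constructor
      · rw [hbb] at *
        rw [hR1]
        exact (hconst (i' - 1) (by omega) (by omega)).symm
      · intro j hj1 hj2
        exact hconst j hj1 (by omega)
    · -- p' = i' - 1, b' = A'
      have hC'd : C' = δ (i' - 1) := by
        rcases hA' with h | h <;> rcases hδ (i' - 1) with hd | hd
        · exact absurd (h.trans hd.symm) hR2
        · rcases hC' with hc | hc
          · exact absurd ⟨h, hc, hd⟩ hex1'
          · omega
        · rcases hC' with hc | hc
          · omega
          · exact absurd ⟨h, hc, hd⟩ hex2'
        · exact absurd (h.trans hd.symm) hR2
      have eR : (i' : ℤ) * A' + ((i' : ℤ) + 1) * C' - (i' : ℤ) * δ (i' - 1)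
          + (∑ j ∈ Finset.Ico i' L, δ j)
          = (((i' - 1 : ℕ) : ℤ) + 1) * A' + ∑ j ∈ Finset.Ico (i' - 1) L, δ j := by
        rw [hC'd, Finset.sum_eq_sum_Ico_succ_bot (by omega : i' - 1 < L),
          show (i' - 1) + 1 = i' from by omega]
        have : ((i' - 1 : ℕ) : ℤ) = (i' : ℤ) - 1 := by omega
        rw [this]; ring
      have esub := vt_sub L i (i' - 1) (by omega) (by omega) δ hδ C A' hC hA'
        (by rw [← eL, e, eR])
      obtain ⟨hbb, hconst⟩ := esub
      refine ⟨hbb, ?_⟩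
      intro j hj1 hj2
      exact hconst j hj1 (by omega)
  · -- p = i - 1, b = A : impossible
    exfalso
    have hCd : C = δ (i - 1) := by
      rcases hA with h | h <;> rcases hδ (i - 1) with hd | hd
      · exact absurd (h.trans hd.symm) hL2
      · rcases hC with hc | hc
        · exact absurd ⟨h, hc, hd⟩ (hex1 hi1)
        · omega
      · rcases hC with hc | hc
        · omega
        · exact absurd ⟨h, hc, hd⟩ (hex2 hi1)
      · exact absurd (h.trans hd.symm) hL2
    have eL : (i : ℤ) * A + ((i : ℤ) + 1) * C - (i : ℤ) * δ (i - 1)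
        + (∑ j ∈ Finset.Ico i L, δ j)
        = (((i - 1 : ℕ) : ℤ) + 1) * A + ∑ j ∈ Finset.Ico (i - 1) L, δ j := by
      rw [hCd, Finset.sum_eq_sum_Ico_succ_bot (by omega : i - 1 < L),
        show (i - 1) + 1 = i from by omega]
      have : ((i - 1 : ℕ) : ℤ) = (i : ℤ) - 1 := by omega
      rw [this]; ring
    rcases hR with hR1 | hR2
    · have esub := vt_sub L (i - 1) i' (by omega) h2 δ hδ A C' hA hC' (by rw [← eL, e, hR1]; ring)
      obtain ⟨hbb, hconst⟩ := esub
      exact hL2 (hconst (i - 1) le_rfl (by omega)).symm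
    · have hC'd : C' = δ (i' - 1) := by
        rcases hA' with h | h <;> rcases hδ (i' - 1) with hd | hd
        · exact absurd (h.trans hd.symm) hR2
        · rcases hC' with hc | hc
          · exact absurd ⟨h, hc, hd⟩ hex1'
          · omega
        · rcases hC' with hc | hc
          · omega
          · exact absurd ⟨h, hc, hd⟩ hex2'
        · exact absurd (h.trans hd.symm) hR2
      have eR : (i' : ℤ) * A' + ((i' : ℤ) + 1) * C' - (i' : ℤ) * δ (i' - 1)
          + (∑ j ∈ Finset.Ico i' L, δ j)
          = (((i' - 1 : ℕ) : ℤ) + 1) * A' + ∑ j ∈ Finset.Ico (i' - 1) L, δ j := by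
        rw [hC'd, Finset.sum_eq_sum_Ico_succ_bot (by omega : i' - 1 < L),
          show (i' - 1) + 1 = i' from by omega]
        have : ((i' - 1 : ℕ) : ℤ) = (i' : ℤ) - 1 := by omega
        rw [this]; ring
      have esub := vt_sub L (i - 1) (i' - 1) (by omega) (by omega) δ hδ A A' hA hA'
        (by rw [← eL, e, eR])
      obtain ⟨hbb, hconst⟩ := esub
      exact hL2 (hconst (i - 1) le_rfl (by omega)).symm

lemma eraseIdx_rel (x : List ℕ) (i : ℕ) (hi : i < x.length) (j : ℕ) :
    ((x.getD j 0 : ℤ)) =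
      if j < i then ((x.eraseIdx i).getD j 0 : ℤ)
      else if j = i then (x.getD i 0 : ℤ)
      else ((x.eraseIdx i).getD (j - 1) 0 : ℤ) := by
  have hlen : (x.eraseIdx i).length = x.length - 1 := List.length_eraseIdx_of_lt hi
  by_cases h1 : j < i
  · rw [if_pos h1, List.getD_eq_getElem _ _ (show j < x.length by omega),
      List.getD_eq_getElem _ _ (show j < (x.eraseIdx i).length by omega),
      List.getElem_eraseIdx_of_lt (l := x) (i := i) (j := j) _ h1]
  · rw [if_neg h1]
    by_cases h2 : j = i
    · rw [if_pos h2, h2]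
    · rw [if_neg h2]
      by_cases h3 : j < x.length
      · rw [List.getD_eq_getElem _ _ h3,
          List.getD_eq_getElem _ _ (show j - 1 < (x.eraseIdx i).length by omega),
          List.getElem_eraseIdx_of_ge (l := x) (i := i) (j := j - 1) (by omega) (by omega)]
        simp only [show j - 1 + 1 = j from by omega]
      · rw [List.getD_eq_default _ _ (by omega), List.getD_eq_default _ _ (by omega)]

lemma list_eq_of_cast_getD (x x' : List ℕ) (hl : x.length = x'.length)
    (h : ∀ j, ((x.getD j 0 : ℤ)) = (x'.getD j 0 : ℤ)) : x = x' := by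
  apply List.ext_getElem hl
  intro j h1 h2
  have hj := h j
  rw [List.getD_eq_getElem _ _ h1, List.getD_eq_getElem _ _ h2] at hj
  exact_mod_cast hj

lemma arith_main (q n s s' G G' S S' : ℤ)
    (hq : 2 ≤ q) (hn : 1 ≤ n)
    (hs : 0 ≤ s) (hs2 : s ≤ q - 1) (hs' : 0 ≤ s') (hs2' : s' ≤ q - 1)
    (hG0 : 0 ≤ G) (hG1 : G ≤ n - 1) (hG0' : 0 ≤ G') (hG1' : G' ≤ n - 1)
    (hEq : S' - S = (s' - s) + q * (G' - G))
    (hdvd : (q * n) ∣ S' - S) : s = s' ∧ G = G' := by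
  have hb1 : q * (G' - G) ≤ q * (n - 1) :=
    mul_le_mul_of_nonneg_left (by linarith) (by linarith)
  have hb2 : q * (-(n - 1)) ≤ q * (G' - G) :=
    mul_le_mul_of_nonneg_left (by linarith) (by linarith)
  have key0 : S' - S = 0 := by
    apply Int.eq_zero_of_abs_lt_dvd hdvd
    rw [hEq, abs_lt]
    constructor <;> nlinarith
  rw [key0] at hEq
  have hd2 : s' - s = q * (G - G') := by linear_combination -hEq
  have h3 : s' - s = 0 := by
    apply Int.eq_zero_of_abs_lt_dvd ⟨G - G', hd2⟩
    rw [abs_lt]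
    constructor <;> linarith
  have h4 : q * (G' - G) = 0 := by linarith
  rcases mul_eq_zero.mp h4 with h | h
  · constructor <;> linarith
  · constructor <;> linarith

lemma core_main (q n : ℕ) (hq : 2 ≤ q)
    (x x' : List ℕ)
    (hxlen : x.length = n) (hxq : ∀ b ∈ x, b < q)
    (hx'len : x'.length = n) (hx'q : ∀ b ∈ x', b < q)
    (hdvd : ((q : ℤ) * (n : ℤ)) ∣ (synL (diffL q x') : ℤ) - (synL (diffL q x) : ℤ))
    (i i' : ℕ) (hi : i < n) (hi' : i' < n) (hii : i ≤ i')
    (heq : x.eraseIdx i = x'.eraseIdx i') : x = x' := by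
  have hn : 1 ≤ n := by omega
  have hL1 : n - 1 + 1 = n := by omega
  have hzlen : (x.eraseIdx i).length = n - 1 := by
    rw [List.length_eraseIdx_of_lt (by omega), hxlen]
  have hXrel : ∀ j, ((x.getD j 0 : ℤ))
      = if j < i then (((x.eraseIdx i).getD j 0 : ℤ))
        else if j = i then ((x.getD i 0 : ℤ)) else (((x.eraseIdx i).getD (j - 1) 0 : ℤ)) :=
    fun j => eraseIdx_rel x i (by omega) j
  have hX'rel : ∀ j, ((x'.getD j 0 : ℤ))
      = if j < i' then (((x.eraseIdx i).getD j 0 : ℤ))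
        else if j = i' then ((x'.getD i' 0 : ℤ)) else (((x.eraseIdx i).getD (j - 1) 0 : ℤ)) := by
    intro j
    have h := eraseIdx_rel x' i' (by omega) j
    rw [← heq] at h
    exact h
  have hs0 : (0 : ℤ) ≤ (x.getD i 0 : ℤ) := Int.natCast_nonneg _
  have hs0' : (0 : ℤ) ≤ (x'.getD i' 0 : ℤ) := Int.natCast_nonneg _
  have hsq : ((x.getD i 0 : ℤ)) ≤ (q : ℤ) - 1 := by
    have h : x.getD i 0 < q := by
      rw [List.getD_eq_getElem _ _ (by omega)]
      exact hxq _ (List.getElem_mem _)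
    omega
  have hsq' : ((x'.getD i' 0 : ℤ)) ≤ (q : ℤ) - 1 := by
    have h : x'.getD i' 0 < q := by
      rw [List.getD_eq_getElem _ _ (by omega)]
      exact hx'q _ (List.getElem_mem _)
    omega
  have hZpos : ∀ j, (0 : ℤ) ≤ (((x.eraseIdx i).getD j 0 : ℤ)) := fun j => Int.natCast_nonneg _
  have hZ0 : ∀ j, n - 1 ≤ j → (((x.eraseIdx i).getD j 0 : ℤ)) = 0 := by
    intro j hj
    rw [List.getD_eq_default _ _ (by omega)]
    rfl
  -- syndromes
  have hsx := synd_eq q (by omega) x hxq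
  have hsx' := synd_eq q (by omega) x' hx'q
  rw [hxlen] at hsx
  rw [hx'len] at hsx'
  -- sum decomposition
  have hsum : (∑ j ∈ Finset.range n, (x.getD j 0 : ℤ))
      = (x.getD i 0 : ℤ) + ∑ j ∈ Finset.range (n - 1), ((x.eraseIdx i).getD j 0 : ℤ) := by
    rw [← hL1]
    exact sum_insert_fn (n - 1) i (by omega) _ _ _ hXrel
  have hsum' : (∑ j ∈ Finset.range n, (x'.getD j 0 : ℤ))
      = (x'.getD i' 0 : ℤ) + ∑ j ∈ Finset.range (n - 1), ((x.eraseIdx i).getD j 0 : ℤ) := by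
    rw [← hL1]
    exact sum_insert_fn (n - 1) i' (by omega) _ _ _ hX'rel
  -- Wf decomposition
  have hW := Wf_insert (n - 1) i (by omega) _ _ _ hs0 hZpos hZ0 hXrel
  have hW' := Wf_insert (n - 1) i' (by omega) _ _ _ hs0' hZpos hZ0 hX'rel
  have hGb := G_bound (n - 1) i (by omega) _ _ hs0 hZpos hZ0
  have hGb' := G_bound (n - 1) i' (by omega) _ _ hs0' hZpos hZ0
  obtain ⟨hG0, hG1⟩ := hGb
  obtain ⟨hG0', hG1'⟩ := hGb'
  have hLcast : ((n - 1 : ℕ) : ℤ) = (n : ℤ) - 1 := by omega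
  rw [hLcast] at hG1 hG1'
  have hq0 : (0 : ℤ) < q := by exact_mod_cast by omega
  have hn0 : (0 : ℤ) < n := by exact_mod_cast hn
  -- the big difference equation
  have hEq : (synL (diffL q x') : ℤ) - (synL (diffL q x) : ℤ)
      = ((x'.getD i' 0 : ℤ) - (x.getD i 0 : ℤ))
        + (q : ℤ) * (((i' : ℤ) * indI (((x.eraseIdx i).getD (i' - 1) 0 : ℤ) < (x'.getD i' 0 : ℤ))
            + ((i' : ℤ) + 1) * indI ((x'.getD i' 0 : ℤ) < ((x.eraseIdx i).getD i' 0 : ℤ))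
            - (i' : ℤ) * indI (((x.eraseIdx i).getD (i' - 1) 0 : ℤ) < ((x.eraseIdx i).getD i' 0 : ℤ))
            + ∑ j ∈ Finset.Ico i' (n - 1),
                indI (((x.eraseIdx i).getD j 0 : ℤ) < ((x.eraseIdx i).getD (j + 1) 0 : ℤ)))
          - (((i : ℤ) * indI (((x.eraseIdx i).getD (i - 1) 0 : ℤ) < (x.getD i 0 : ℤ))
            + ((i : ℤ) + 1) * indI ((x.getD i 0 : ℤ) < ((x.eraseIdx i).getD i 0 : ℤ))
            - (i : ℤ) * indI (((x.eraseIdx i).getD (i - 1) 0 : ℤ) < ((x.eraseIdx i).getD i 0 : ℤ))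
            + ∑ j ∈ Finset.Ico i (n - 1),
                indI (((x.eraseIdx i).getD j 0 : ℤ) < ((x.eraseIdx i).getD (j + 1) 0 : ℤ))))) := by
    rw [hsx, hsx', hsum, hsum', hW, hW']
    ring
  obtain ⟨hss, hGG⟩ := arith_main (q : ℤ) (n : ℤ) _ _ _ _ _ _
    (by exact_mod_cast hq) (by exact_mod_cast hn)
    hs0 hsq hs0' hsq' hG0 hG1 hG0' hG1' hEq
    (by push_cast at hdvd ⊢; exact hdvd)
  rcases eq_or_lt_of_le hii with rfl | hlt
  · -- i = i'
    apply list_eq_of_cast_getD x x' (by omega)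
    intro j
    rw [hXrel j, hX'rel j]
    by_cases c1 : j < i
    · rw [if_pos c1, if_pos c1]
    · rw [if_neg c1, if_neg c1]
      by_cases c2 : j = i
      · rw [if_pos c2, if_pos c2]; exact hss
      · rw [if_neg c2, if_neg c2]
  · -- i < i'
    have hex1 : 1 ≤ i → ¬(indI (((x.eraseIdx i).getD (i - 1) 0 : ℤ) < (x.getD i 0 : ℤ)) = 0
        ∧ indI ((x.getD i 0 : ℤ) < ((x.eraseIdx i).getD i 0 : ℤ)) = 0
        ∧ indI (((x.eraseIdx i).getD (i - 1) 0 : ℤ) < ((x.eraseIdx i).getD (i - 1 + 1) 0 : ℤ)) = 1) := by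
      intro hi1
      rw [show i - 1 + 1 = i from by omega]
      rintro ⟨e1, e2, e3⟩
      have f1 := not_lt.mp (indI_eq_zero_iff.mp e1)
      have f2 := not_lt.mp (indI_eq_zero_iff.mp e2)
      have f3 := indI_eq_one_iff.mp e3
      linarith
    have hex2 : 1 ≤ i → ¬(indI (((x.eraseIdx i).getD (i - 1) 0 : ℤ) < (x.getD i 0 : ℤ)) = 1
        ∧ indI ((x.getD i 0 : ℤ) < ((x.eraseIdx i).getD i 0 : ℤ)) = 1
        ∧ indI (((x.eraseIdx i).getD (i - 1) 0 : ℤ) < ((x.eraseIdx i).getD (i - 1 + 1) 0 : ℤ)) = 0) := by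
      intro hi1
      rw [show i - 1 + 1 = i from by omega]
      rintro ⟨e1, e2, e3⟩
      have f1 := indI_eq_one_iff.mp e1
      have f2 := indI_eq_one_iff.mp e2
      have f3 := not_lt.mp (indI_eq_zero_iff.mp e3)
      linarith
    have hex1' : ¬(indI (((x.eraseIdx i).getD (i' - 1) 0 : ℤ) < (x'.getD i' 0 : ℤ)) = 0
        ∧ indI ((x'.getD i' 0 : ℤ) < ((x.eraseIdx i).getD i' 0 : ℤ)) = 0
        ∧ indI (((x.eraseIdx i).getD (i' - 1) 0 : ℤ) < ((x.eraseIdx i).getD (i' - 1 + 1) 0 : ℤ)) = 1) := by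
      rw [show i' - 1 + 1 = i' from by omega]
      rintro ⟨e1, e2, e3⟩
      have f1 := not_lt.mp (indI_eq_zero_iff.mp e1)
      have f2 := not_lt.mp (indI_eq_zero_iff.mp e2)
      have f3 := indI_eq_one_iff.mp e3
      linarith
    have hex2' : ¬(indI (((x.eraseIdx i).getD (i' - 1) 0 : ℤ) < (x'.getD i' 0 : ℤ)) = 1
        ∧ indI ((x'.getD i' 0 : ℤ) < ((x.eraseIdx i).getD i' 0 : ℤ)) = 1
        ∧ indI (((x.eraseIdx i).getD (i' - 1) 0 : ℤ) < ((x.eraseIdx i).getD (i' - 1 + 1) 0 : ℤ)) = 0) := by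
      rw [show i' - 1 + 1 = i' from by omega]
      rintro ⟨e1, e2, e3⟩
      have f1 := indI_eq_one_iff.mp e1
      have f2 := indI_eq_one_iff.mp e2
      have f3 := not_lt.mp (indI_eq_zero_iff.mp e3)
      linarith
    have ekey : (i : ℤ) * indI (((x.eraseIdx i).getD (i - 1) 0 : ℤ) < (x.getD i 0 : ℤ))
        + ((i : ℤ) + 1) * indI ((x.getD i 0 : ℤ) < ((x.eraseIdx i).getD i 0 : ℤ))
        - (i : ℤ) * indI (((x.eraseIdx i).getD (i - 1) 0 : ℤ) < ((x.eraseIdx i).getD (i - 1 + 1) 0 : ℤ))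
        + ∑ j ∈ Finset.Ico i (n - 1),
            indI (((x.eraseIdx i).getD j 0 : ℤ) < ((x.eraseIdx i).getD (j + 1) 0 : ℤ))
        = (i' : ℤ) * indI (((x.eraseIdx i).getD (i' - 1) 0 : ℤ) < (x'.getD i' 0 : ℤ))
        + ((i' : ℤ) + 1) * indI ((x'.getD i' 0 : ℤ) < ((x.eraseIdx i).getD i' 0 : ℤ))
        - (i' : ℤ) * indI (((x.eraseIdx i).getD (i' - 1) 0 : ℤ) < ((x.eraseIdx i).getD (i' - 1 + 1) 0 : ℤ))
        + ∑ j ∈ Finset.Ico i' (n - 1),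
            indI (((x.eraseIdx i).getD j 0 : ℤ) < ((x.eraseIdx i).getD (j + 1) 0 : ℤ)) := by
      rw [show i' - 1 + 1 = i' from by omega]
      rcases Nat.eq_zero_or_pos i with rfl | hi1
      · push_cast at hGG ⊢
        linear_combination hGG
      · rw [show i - 1 + 1 = i from by omega]
        exact hGG
    obtain ⟨hCA', hchain⟩ := key_s13 (n - 1) i i' hlt (by omega)
      (fun j => indI (((x.eraseIdx i).getD j 0 : ℤ) < ((x.eraseIdx i).getD (j + 1) 0 : ℤ)))
      (fun j => indI_bit _)
      (indI (((x.eraseIdx i).getD (i - 1) 0 : ℤ) < (x.getD i 0 : ℤ)))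
      (indI ((x.getD i 0 : ℤ) < ((x.eraseIdx i).getD i 0 : ℤ)))
      (indI (((x.eraseIdx i).getD (i' - 1) 0 : ℤ) < (x'.getD i' 0 : ℤ)))
      (indI ((x'.getD i' 0 : ℤ) < ((x.eraseIdx i).getD i' 0 : ℤ)))
      (indI_bit _) (indI_bit _) (indI_bit _) (indI_bit _)
      hex1 hex2 hex1' hex2' ekey
    by_cases hCpos : (x.getD i 0 : ℤ) < ((x.eraseIdx i).getD i 0 : ℤ)
    · exfalso
      have hC1 : indI ((x.getD i 0 : ℤ) < ((x.eraseIdx i).getD i 0 : ℤ)) = 1 :=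
        indI_eq_one_iff.mpr hCpos
      have hA'1 : (((x.eraseIdx i).getD (i' - 1) 0 : ℤ)) < (x'.getD i' 0 : ℤ) :=
        indI_eq_one_iff.mp (by rw [← hCA']; exact hC1)
      have mono : ∀ k, i ≤ k → k ≤ i' - 1 →
          (x.getD i 0 : ℤ) < ((x.eraseIdx i).getD k 0 : ℤ) := by
        intro k hk
        induction k, hk using Nat.le_induction with
        | base => intro _; exact hCpos
        | succ m hm ih =>
            intro hm2
            have hd := hchain m hm (by omega)
            rw [hC1] at hd
            have g1 := indI_eq_one_iff.mp hd
            have g2 := ih (by omega)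
            linarith
      have hfin := mono (i' - 1) (by omega) le_rfl
      linarith [hss, hA'1, hfin]
    · have hC0 : indI ((x.getD i 0 : ℤ) < ((x.eraseIdx i).getD i 0 : ℤ)) = 0 :=
        indI_eq_zero_iff.mpr hCpos
      have hA'0 : ¬ ((((x.eraseIdx i).getD (i' - 1) 0 : ℤ)) < (x'.getD i' 0 : ℤ)) :=
        indI_eq_zero_iff.mp (by rw [← hCA']; exact hC0)
      have hup : ∀ k, i ≤ k → k ≤ i' - 1 →
          ((x.eraseIdx i).getD k 0 : ℤ) ≤ (x.getD i 0 : ℤ) := by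
        intro k hk
        induction k, hk using Nat.le_induction with
        | base => intro _; exact not_lt.mp hCpos
        | succ m hm ih =>
            intro hm2
            have hd := hchain m hm (by omega)
            rw [hC0] at hd
            have g1 := not_lt.mp (indI_eq_zero_iff.mp hd)
            have g2 := ih (by omega)
            linarith
      have hdown : ∀ m, i ≤ m → m ≤ i' - 1 → ∀ k, i ≤ k → k ≤ m →
          ((x.eraseIdx i).getD m 0 : ℤ) ≤ ((x.eraseIdx i).getD k 0 : ℤ) := by
        intro m hm
        induction m, hm using Nat.le_induction with
        | base =>
            intro _ k hk1 hk2
            have hki : k = i := by omega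
            rw [hki]
        | succ m hm ih =>
            intro hm2 k hk1 hk2
            have hd := hchain m hm (by omega)
            rw [hC0] at hd
            have g1 := not_lt.mp (indI_eq_zero_iff.mp hd)
            by_cases hk3 : k = m + 1
            · rw [hk3]
            · have g2 := ih (by omega) k hk1 (by omega)
              linarith
      have hZconst : ∀ k, i ≤ k → k ≤ i' - 1 →
          ((x.eraseIdx i).getD k 0 : ℤ) = (x.getD i 0 : ℤ) := by
        intro k hk1 hk2
        have h8 := hup k hk1 hk2
        have h9 := hdown (i' - 1) (by omega) le_rfl k hk1 hk2
        have h10 := not_lt.mp hA'0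
        rw [← hss] at h10
        linarith
      apply list_eq_of_cast_getD x x' (by omega)
      intro j
      rw [hXrel j, hX'rel j]
      by_cases c1 : j < i
      · rw [if_pos c1, if_pos (by omega : j < i')]
      · rw [if_neg c1]
        by_cases c2 : j = i
        · rw [if_pos c2, if_pos (by omega : j < i'), c2]
          exact (hZconst i le_rfl (by omega)).symm
        · rw [if_neg c2]
          by_cases c3 : j < i'
          · rw [if_pos c3]
            rw [hZconst (j - 1) (by omega) (by omega), hZconst j (by omega) (by omega)]
          · rw [if_neg c3]
            by_cases c4 : j = i'
            · rw [if_pos c4, c4]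
              rw [hZconst (i' - 1) (by omega) le_rfl]
              exact hss
            · rw [if_neg c4]

theorem stmt_13 (q n a : ℕ) (hq : 2 ≤ q) (hn : 1 ≤ n) (ha : a < q * n)
    (x x' : List ℕ)
    (hxlen : x.length = n) (hxq : ∀ b ∈ x, b < q)
    (hx'len : x'.length = n) (hx'q : ∀ b ∈ x', b < q)
    (hxsyn : synL (diffL q x) % (q * n) = a)
    (hx'syn : synL (diffL q x') % (q * n) = a)
    (hne : x ≠ x') :
    ¬ ∃ z : List ℕ, (∃ i < n, z = x.eraseIdx i) ∧ (∃ i < n, z = x'.eraseIdx i) := by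
  rintro ⟨z, ⟨i, hi, hzi⟩, ⟨i', hi', hzi'⟩⟩
  have heq : x.eraseIdx i = x'.eraseIdx i' := by rw [← hzi, ← hzi']
  have hmm : synL (diffL q x) ≡ synL (diffL q x') [MOD q * n] := by
    unfold Nat.ModEq
    rw [hxsyn, hx'syn]
  have hdvd : ((q : ℤ) * (n : ℤ)) ∣ (synL (diffL q x') : ℤ) - (synL (diffL q x) : ℤ) := by
    have h2 := hmm.dvd
    push_cast at h2
    exact h2
  rcases le_total i i' with h | h
  · exact hne (core_main q n hq x x' hxlen hxq hx'len hx'q hdvd i i' hi hi' h heq)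
  · have hdvd' : ((q : ℤ) * (n : ℤ)) ∣ (synL (diffL q x) : ℤ) - (synL (diffL q x') : ℤ) := by
      have h3 := dvd_neg.mpr hdvd
      simpa using h3
    exact hne ((core_main q n hq x' x hx'len hx'q hxlen hxq hdvd' i' i hi' hi h heq.symm).symm)
end

section
/- Let q ≥ 2, n ≥ 1, a ∈ ℤ_{qn}, and let VT*_a(n;q) = {x ∈ Σ_q^n : Syn(Diff(x)) ≡ a (mod qn)}. Then VT*_a(n;q) corrects a single insertion or a single deletion: for any two distinct codewords x, x̃ ∈ VT*_a(n;q), the sets B^InDel(x) and B^InDel(x̃) are disjoint, where B^InDel(x) is the set of all sequences obtainable from x by a single insertion or a single deletion. -/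
/-- `z` is obtained from `x` by deleting one coordinate. -/
def delOf (x z : List ℕ) : Prop := ∃ i < x.length, z = x.eraseIdx i

/-- `B^InDel(x)`: all `q`-ary sequences obtained from `x` by a single deletion or a
single insertion. -/
def inDelBall (q : ℕ) (x : List ℕ) : Set (List ℕ) :=
  {z | (∀ b ∈ z, b < q) ∧ (delOf x z ∨ delOf z x)}

namespace VT14
open Finset

/-- key mod-carry lemma -/
lemma mod_carry {q a b : ℤ} (hq : 0 < q) (ha : 0 ≤ a) (ha' : a < q) (hb : 0 ≤ b) (hb' : b < q) :
    (a + b) % q = a + b - q * (if q ≤ a + b then 1 else 0) := by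
  split_ifs with h
  · have h1 : (a + b) % q = (a + b - q) % q := by simp [Int.sub_emod]
    rw [h1, Int.emod_eq_of_lt (by omega) (by omega)]; ring
  · rw [Int.emod_eq_of_lt (by omega) (by omega)]; ring

def Syn (n : ℕ) (Y : ℕ → ℤ) : ℤ := ∑ j ∈ Finset.range n, ((j : ℤ) + 1) * Y j

def car (q i : ℕ) (Y : ℕ → ℤ) : ℤ := if (q : ℤ) ≤ Y (i - 1) + Y i then 1 else 0

def dterm (q n i : ℕ) (Y : ℕ → ℤ) : ℤ :=
  (i : ℤ) * q * car q i Y + ∑ k ∈ Finset.Ico i n, Y k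

lemma car_nonneg (q i : ℕ) (Y : ℕ → ℤ) : 0 ≤ car q i Y := by
  unfold car; split_ifs <;> norm_num

lemma car_le_one (q i : ℕ) (Y : ℕ → ℤ) : car q i Y ≤ 1 := by
  unfold car; split_ifs <;> norm_num

lemma car_cases (q i : ℕ) (Y : ℕ → ℤ) :
    car q i Y = 0 ∨ (car q i Y = 1 ∧ (q : ℤ) ≤ Y (i - 1) + Y i) := by
  unfold car; split_ifs with h
  · exact Or.inr ⟨rfl, h⟩
  · exact Or.inl rfl

/-- `W` (length `n-1`) is obtained from `Y` (length `n`) by merging coordinates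
`i-1` and `i` (mod `q`), i.e. deleting coordinate `i` in the original domain. -/
structure MergeRel (q n i : ℕ) (Y W : ℕ → ℤ) : Prop where
  lt : ∀ j, j + 1 < i → W j = Y j
  mid : ∀ j, j + 1 = i → W j = (Y j + Y (j + 1)) % (q : ℤ)
  ge : ∀ j, i ≤ j → W j = Y (j + 1)

lemma syn_merge (q n i : ℕ) (Y W : ℕ → ℤ) (hq : 0 < q) (hi : i < n)
    (hb : ∀ j, 0 ≤ Y j ∧ Y j < q)
    (h : MergeRel q n i Y W) :
    Syn n Y = Syn (n - 1) W + dterm q n i Y := by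
  rcases i with _ | k
  · -- i = 0
    have e0 : Syn (n - 1) W = ∑ j ∈ Finset.range (n - 1), ((j : ℤ) + 1) * Y (j + 1) :=
      Finset.sum_congr rfl fun j _ => by rw [h.ge j (Nat.zero_le _)]
    have e1 : ∑ j ∈ Finset.Ico 1 n, (j : ℤ) * Y j
        = ∑ j ∈ Finset.range (n - 1), ((j : ℤ) + 1) * Y (j + 1) := by
      rw [Finset.sum_Ico_eq_sum_range]
      apply Finset.sum_congr rfl
      intro j _
      rw [show 1 + j = j + 1 by omega]
      push_cast; ring
    have e2 : Syn n Y = ∑ j ∈ Finset.range n, (j : ℤ) * Y j + ∑ j ∈ Finset.range n, Y j := by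
      rw [Syn, ← Finset.sum_add_distrib]
      exact Finset.sum_congr rfl fun j _ => by ring
    have e3 : ∑ j ∈ Finset.range n, (j : ℤ) * Y j = ∑ j ∈ Finset.Ico 1 n, (j : ℤ) * Y j := by
      rw [Finset.range_eq_Ico, Finset.sum_eq_sum_Ico_succ_bot (by omega : 0 < n)]
      simp
    have e4 : dterm q n 0 Y = ∑ j ∈ Finset.Ico 0 n, Y j := by
      simp [dterm]
    have e5 : ∑ j ∈ Finset.range n, Y j = ∑ j ∈ Finset.Ico 0 n, Y j := by
      rw [Finset.range_eq_Ico]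
    rw [e2, e3, e4, e5, e0, ← e1]
  · -- i = k+1
    have hk2 : k + 2 ≤ n := hi
    set c : ℤ := car q (k + 1) Y with hc
    have e1 : Syn n Y = (∑ j ∈ Finset.range k, ((j : ℤ) + 1) * Y j)
        + ((k : ℤ) + 1) * Y k + ((k : ℤ) + 2) * Y (k + 1)
        + ∑ j ∈ Finset.Ico (k + 2) n, ((j : ℤ) + 1) * Y j := by
      rw [Syn, ← Finset.sum_range_add_sum_Ico _ hk2, Finset.sum_range_succ,
        Finset.sum_range_succ]
      push_cast; ring
    have e2 : Syn (n - 1) W = (∑ j ∈ Finset.range k, ((j : ℤ) + 1) * W j)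
        + ((k : ℤ) + 1) * W k + ∑ j ∈ Finset.Ico (k + 1) (n - 1), ((j : ℤ) + 1) * W j := by
      rw [Syn, ← Finset.sum_range_add_sum_Ico _ (show k + 1 ≤ n - 1 by omega),
        Finset.sum_range_succ]
    have e3 : ∑ j ∈ Finset.range k, ((j : ℤ) + 1) * W j
        = ∑ j ∈ Finset.range k, ((j : ℤ) + 1) * Y j :=
      Finset.sum_congr rfl fun j hj => by
        rw [h.lt j (by simpa using Finset.mem_range.mp hj)]
    have e4 : ∑ j ∈ Finset.Ico (k + 1) (n - 1), ((j : ℤ) + 1) * W j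
        = ∑ j ∈ Finset.Ico (k + 2) n, (j : ℤ) * Y j := by
      rw [Finset.sum_Ico_eq_sum_range, Finset.sum_Ico_eq_sum_range,
        show n - 1 - (k + 1) = n - (k + 2) by omega]
      apply Finset.sum_congr rfl
      intro j _
      rw [h.ge (k + 1 + j) (by omega), show k + 1 + j + 1 = k + 2 + j by omega]
      push_cast; ring
    have e5 : W k = Y k + Y (k + 1) - (q : ℤ) * c := by
      rw [h.mid k rfl, hc, car, show k + 1 - 1 = k by omega,
        mod_carry (by exact_mod_cast hq) (hb k).1 (hb k).2 (hb (k + 1)).1 (hb (k + 1)).2]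
    have e6 : ∑ j ∈ Finset.Ico (k + 2) n, ((j : ℤ) + 1) * Y j
        = ∑ j ∈ Finset.Ico (k + 2) n, (j : ℤ) * Y j + ∑ j ∈ Finset.Ico (k + 2) n, Y j := by
      rw [← Finset.sum_add_distrib]
      exact Finset.sum_congr rfl fun j _ => by ring
    have e7 : ∑ j ∈ Finset.Ico (k + 1) n, Y j
        = Y (k + 1) + ∑ j ∈ Finset.Ico (k + 2) n, Y j :=
      Finset.sum_eq_sum_Ico_succ_bot (by omega) _
    have e8 : dterm q n (k + 1) Y = ((k : ℤ) + 1) * q * c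
        + ∑ j ∈ Finset.Ico (k + 1) n, Y j := by
      rw [dterm, hc]; push_cast; ring
    rw [e1, e2, e3, e4, e5, e6, e8, e7]; ring

lemma dterm_nonneg (q n i : ℕ) (Y : ℕ → ℤ) (hb : ∀ j, 0 ≤ Y j ∧ Y j < q) :
    0 ≤ dterm q n i Y := by
  apply add_nonneg
  · apply mul_nonneg (mul_nonneg (Int.natCast_nonneg i) (Int.natCast_nonneg q)) (car_nonneg _ _ _)
  · exact Finset.sum_nonneg fun j _ => (hb j).1

lemma dterm_lt (q n i : ℕ) (Y : ℕ → ℤ) (hq : 1 ≤ q) (hi : i < n)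
    (hb : ∀ j, 0 ≤ Y j ∧ Y j < q) :
    dterm q n i Y < (q : ℤ) * n := by
  have h1 : (i : ℤ) * q * car q i Y ≤ (i : ℤ) * q :=
    mul_le_of_le_one_right (mul_nonneg (Int.natCast_nonneg i) (Int.natCast_nonneg q))
      (car_le_one _ _ _)
  have h2 : ∑ k ∈ Finset.Ico i n, Y k ≤ ((n : ℤ) - i) * ((q : ℤ) - 1) := by
    have := Finset.sum_le_card_nsmul (Finset.Ico i n) Y ((q : ℤ) - 1)
      (fun j _ => by have := (hb j).2; omega)
    rw [Nat.card_Ico, nsmul_eq_mul] at this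
    calc ∑ k ∈ Finset.Ico i n, Y k ≤ ((n - i : ℕ) : ℤ) * ((q : ℤ) - 1) := this
      _ = ((n : ℤ) - i) * ((q : ℤ) - 1) := by
          rw [Nat.cast_sub hi.le]
  have hin : (i : ℤ) < n := by exact_mod_cast hi
  have hq' : (1 : ℤ) ≤ q := by exact_mod_cast hq
  rw [dterm]
  nlinarith [h1, h2, hin, hq']


lemma sum_Ico_le (q : ℕ) (Y : ℕ → ℤ) (hb : ∀ j, 0 ≤ Y j ∧ Y j < q) (a b : ℕ) (hab : a ≤ b) :
    ∑ k ∈ Finset.Ico a b, Y k ≤ ((b : ℤ) - a) * ((q : ℤ) - 1) := by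
  have h := Finset.sum_le_card_nsmul (Finset.Ico a b) Y ((q : ℤ) - 1)
    (fun j _ => by have := (hb j).2; omega)
  rw [Nat.card_Ico, nsmul_eq_mul] at h
  calc ∑ k ∈ Finset.Ico a b, Y k ≤ ((b - a : ℕ) : ℤ) * ((q : ℤ) - 1) := h
    _ = ((b : ℤ) - a) * ((q : ℤ) - 1) := by rw [Nat.cast_sub hab]

lemma del_unique_le (q n i i' : ℕ) (Y Y' W : ℕ → ℤ) (hq : 2 ≤ q)
    (hii : i' ≤ i) (hi : i < n)
    (hb : ∀ j, 0 ≤ Y j ∧ Y j < q) (hb' : ∀ j, 0 ≤ Y' j ∧ Y' j < q)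
    (hm : MergeRel q n i Y W) (hm' : MergeRel q n i' Y' W)
    (heq : dterm q n i Y = dterm q n i' Y') :
    ∀ j < n, Y j = Y' j := by
  have hq0 : (0 : ℤ) < (q : ℤ) := by exact_mod_cast (by omega : 0 < q)
  have f2 : ∀ k, i + 1 ≤ k → Y k = Y' k := by
    intro k hk
    obtain ⟨j, rfl⟩ : ∃ j, k = j + 1 := ⟨k - 1, by omega⟩
    rw [← hm.ge j (by omega), hm'.ge j (by omega)]
  rcases eq_or_lt_of_le hii with heqi | hlt
  · -- i' = i
    subst heqi
    have tails : ∑ k ∈ Finset.Ico (i' + 1) n, Y k = ∑ k ∈ Finset.Ico (i' + 1) n, Y' k :=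
      Finset.sum_congr rfl fun k hk => f2 k (Finset.mem_Ico.mp hk).1
    have d1 : dterm q n i' Y
        = (i' : ℤ) * q * car q i' Y + (Y i' + ∑ k ∈ Finset.Ico (i' + 1) n, Y k) := by
      rw [dterm, Finset.sum_eq_sum_Ico_succ_bot hi]
    have d2 : dterm q n i' Y'
        = (i' : ℤ) * q * car q i' Y' + (Y' i' + ∑ k ∈ Finset.Ico (i' + 1) n, Y' k) := by
      rw [dterm, Finset.sum_eq_sum_Ico_succ_bot hi]
    rw [d1, d2, ← tails] at heq
    rcases Nat.eq_zero_or_pos i' with rfl | hipos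
    · have hY0 : Y 0 = Y' 0 := by simpa using heq
      intro j _
      rcases Nat.eq_zero_or_pos j with rfl | hj
      · exact hY0
      · exact f2 j (by omega)
    · obtain ⟨k, rfl⟩ : ∃ k, i' = k + 1 := ⟨i' - 1, by omega⟩
      have hk0 : (0 : ℤ) ≤ (k : ℤ) := Int.natCast_nonneg k
      have hcast : ((k + 1 : ℕ) : ℤ) = (k : ℤ) + 1 := by push_cast; ring
      have hsame : car q (k + 1) Y = car q (k + 1) Y' := by
        rcases car_cases q (k + 1) Y with hc | ⟨hc, hcq⟩ <;>
          rcases car_cases q (k + 1) Y' with hc' | ⟨hc', hcq'⟩ <;> rw [hc, hc']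
        · exfalso; rw [hc, hc', hcast] at heq
          nlinarith [(hb (k + 1)).2, (hb' (k + 1)).1]
        · exfalso; rw [hc, hc', hcast] at heq
          nlinarith [(hb (k + 1)).1, (hb' (k + 1)).2]
      have hYi : Y (k + 1) = Y' (k + 1) := by
        rw [hsame] at heq; linarith
      have hmidY : W k = Y k + Y (k + 1) - (q : ℤ) * car q (k + 1) Y := by
        rw [hm.mid k rfl, car, show k + 1 - 1 = k by omega,
          mod_carry hq0 (hb k).1 (hb k).2 (hb (k + 1)).1 (hb (k + 1)).2]
      have hmidY' : W k = Y' k + Y' (k + 1) - (q : ℤ) * car q (k + 1) Y' := by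
        rw [hm'.mid k rfl, car, show k + 1 - 1 = k by omega,
          mod_carry hq0 (hb' k).1 (hb' k).2 (hb' (k + 1)).1 (hb' (k + 1)).2]
      have hYk : Y k = Y' k := by rw [hsame] at hmidY; linarith
      intro j hj
      rcases lt_trichotomy j k with h | rfl | h
      · rw [← hm.lt j (by omega), hm'.lt j (by omega)]
      · exact hYk
      · rcases Nat.eq_or_lt_of_le h with rfl | h2
        · exact hYi
        · exact f2 j (by omega)
  · -- i' < i
    obtain ⟨k, rfl⟩ : ∃ k, i = k + 1 := ⟨i - 1, by omega⟩
    set c : ℤ := car q (k + 1) Y with hcdef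
    set c' : ℤ := car q i' Y' with hc'def
    have s5 : Y' (k + 1) = Y k + Y (k + 1) - (q : ℤ) * c := by
      have h1 : W k = Y' (k + 1) := hm'.ge k (by omega)
      have h2 : W k = (Y k + Y (k + 1)) % (q : ℤ) := hm.mid k rfl
      rw [mod_carry hq0 (hb k).1 (hb k).2 (hb (k + 1)).1 (hb (k + 1)).2] at h2
      rw [hcdef, car, show k + 1 - 1 = k by omega]
      rw [← h1, h2]
    have s6 : ∑ j ∈ Finset.Ico (i' + 1) (k + 1), Y' j = ∑ j ∈ Finset.Ico i' k, Y j := by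
      rw [Finset.sum_Ico_eq_sum_range, Finset.sum_Ico_eq_sum_range,
        show k + 1 - (i' + 1) = k - i' by omega]
      apply Finset.sum_congr rfl
      intro j hj
      have hjk : j < k - i' := Finset.mem_range.mp hj
      have h1 : W (i' + j) = Y' (i' + j + 1) := hm'.ge (i' + j) (by omega)
      have h2 : W (i' + j) = Y (i' + j) := hm.lt (i' + j) (by omega)
      rw [show i' + 1 + j = i' + j + 1 by omega, ← h1, h2]
    -- expand heq into master equation
    have L : dterm q n (k + 1) Y = ((k : ℤ) + 1) * q * c
        + (Y (k + 1) + ∑ j ∈ Finset.Ico (k + 2) n, Y j) := by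
      rw [dterm, Finset.sum_eq_sum_Ico_succ_bot hi, ← hcdef]
      push_cast; ring
    have R : dterm q n i' Y' = (i' : ℤ) * q * c'
        + (Y' i' + ((∑ j ∈ Finset.Ico i' k, Y j)
          + (Y k + Y (k + 1) - (q : ℤ) * c + ∑ j ∈ Finset.Ico (k + 2) n, Y j))) := by
      rw [dterm, Finset.sum_eq_sum_Ico_succ_bot (by omega : i' < n), ← hc'def]
      congr 2
      rw [← Finset.sum_Ico_consecutive Y' (by omega : i' + 1 ≤ k + 1) (by omega : k + 1 ≤ n), s6]
      congr 1
      rw [Finset.sum_eq_sum_Ico_succ_bot (by omega : k + 1 < n), s5]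
      congr 1
      exact Finset.sum_congr rfl fun j hj => (f2 j (by have := Finset.mem_Ico.mp hj; omega)).symm
    have EQ : (q : ℤ) * ((k : ℤ) + 2) * c
        = (i' : ℤ) * q * c' + Y' i' + ∑ j ∈ Finset.Ico i' (k + 1), Y j := by
      rw [Finset.sum_Ico_succ_top (by omega : i' ≤ k)]
      rw [L, R] at heq
      linarith
    rcases car_cases q (k + 1) Y with hc | ⟨hc, hcq⟩
    · -- c = 0 : everything in the window is zero
      rw [← hcdef] at hc
      have hnn1 : (0 : ℤ) ≤ (i' : ℤ) * q * c' :=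
        mul_nonneg (mul_nonneg (Int.natCast_nonneg i') (Int.natCast_nonneg q))
          (car_nonneg _ _ _)
      have hnn2 : (0 : ℤ) ≤ Y' i' := (hb' i').1
      have hnn3 : (0 : ℤ) ≤ ∑ j ∈ Finset.Ico i' (k + 1), Y j :=
        Finset.sum_nonneg fun j _ => (hb j).1
      have hS0 : ∑ j ∈ Finset.Ico i' (k + 1), Y j = 0 := by
        rw [hc] at EQ; linarith
      have hY'0 : Y' i' = 0 := by rw [hc] at EQ; linarith
      have hzero : ∀ m ∈ Finset.Ico i' (k + 1), Y m = 0 :=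
        (Finset.sum_eq_zero_iff_of_nonneg fun j _ => (hb j).1).mp hS0
      have hYz : ∀ m, i' ≤ m → m ≤ k → Y m = 0 := fun m h1 h2 =>
        hzero m (Finset.mem_Ico.mpr ⟨h1, by omega⟩)
      intro j hj
      rcases (by omega : j + 1 < i' ∨ j + 1 = i' ∨ (i' ≤ j ∧ j ≤ k) ∨ j = k + 1 ∨ k + 2 ≤ j)
        with h | h | ⟨h1, h2⟩ | rfl | h
      · rw [← hm.lt j (by omega), hm'.lt j h]
      · have e1 : W j = Y j := hm.lt j (by omega)
        have e2 : W j = (Y' j + Y' (j + 1)) % (q : ℤ) := hm'.mid j h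
        rw [show j + 1 = i' from h, hY'0, add_zero,
          Int.emod_eq_of_lt (hb' j).1 (hb' j).2] at e2
        rw [← e1, e2]
      · have hyj : Y j = 0 := hYz j h1 h2
        have hy'j : Y' j = 0 := by
          rcases Nat.eq_or_lt_of_le h1 with rfl | hlt2
          · exact hY'0
          · obtain ⟨t, rfl⟩ : ∃ t, j = t + 1 := ⟨j - 1, by omega⟩
            have e1 : W t = Y' (t + 1) := hm'.ge t (by omega)
            have e2 : W t = Y t := hm.lt t (by omega)
            rw [← e1, e2]
            exact hYz t (by omega) (by omega)
        rw [hyj, hy'j]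
      · rw [s5, hc, hYz k (by omega) le_rfl]; ring
      · exact f2 j (by omega)
    · -- c = 1 : contradiction by a counting bound
      exfalso
      rw [← hcdef] at hc
      have hc'le : (i' : ℤ) * q * c' ≤ (i' : ℤ) * q := by
        rcases car_cases q i' Y' with h | ⟨h, _⟩ <;> rw [← hc'def] at h <;> rw [h]
        · positivity
        · simp
      have hsum : ∑ j ∈ Finset.Ico i' (k + 1), Y j ≤ ((k : ℤ) + 1 - i') * ((q : ℤ) - 1) := by
        have := sum_Ico_le q Y hb i' (k + 1) (by omega)
        calc ∑ j ∈ Finset.Ico i' (k + 1), Y j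
            ≤ (((k + 1 : ℕ) : ℤ) - i') * ((q : ℤ) - 1) := by exact_mod_cast this
          _ = ((k : ℤ) + 1 - i') * ((q : ℤ) - 1) := by push_cast; ring
      have hY'b : Y' i' ≤ (q : ℤ) - 1 := by have := (hb' i').2; omega
      have hi'k : (i' : ℤ) ≤ (k : ℤ) := by exact_mod_cast (by omega : i' ≤ k)
      rw [hc] at EQ
      nlinarith [hsum, hc'le, hY'b, hi'k]

lemma del_unique (q n i i' : ℕ) (Y Y' W : ℕ → ℤ) (hq : 2 ≤ q)
    (hi : i < n) (hi' : i' < n)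
    (hb : ∀ j, 0 ≤ Y j ∧ Y j < q) (hb' : ∀ j, 0 ≤ Y' j ∧ Y' j < q)
    (hm : MergeRel q n i Y W) (hm' : MergeRel q n i' Y' W)
    (heq : dterm q n i Y = dterm q n i' Y') :
    ∀ j < n, Y j = Y' j := by
  rcases le_total i' i with h | h
  · exact del_unique_le q n i i' Y Y' W hq h hi hb hb' hm hm' heq
  · intro j hj
    exact (del_unique_le q n i' i Y' Y W hq h hi' hb' hb hm' hm heq.symm j hj).symm


/-- Pure arithmetic core of the insertion case. -/
lemma ins_arith (q n i i' c c' M d : ℤ) (hq : 2 ≤ q) (hn : 1 ≤ n)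
    (hi : i ≤ n) (hii : i' < i) (h0i' : 0 ≤ i')
    (hc0 : 0 ≤ c) (hc1 : c ≤ 1) (hc0' : 0 ≤ c') (hc1' : c' ≤ 1)
    (hM0 : 0 ≤ M) (hMle : M ≤ (i - i') * (q - 1))
    (hd : q * (i * c - i' * c') - M = q * n * d) :
    M = 0 := by
  have h0i : 0 ≤ i := by linarith
  have hA0 : 0 ≤ i * c := mul_nonneg h0i hc0
  have hA : i * c ≤ i := mul_le_of_le_one_right h0i hc1
  have hB0 : 0 ≤ i' * c' := mul_nonneg h0i' hc0'
  have hB : i' * c' ≤ i' := mul_le_of_le_one_right h0i' hc1'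
  have hqn : (0 : ℤ) < q * n := mul_pos (by linarith) (by linarith)
  have h1 : q * (i * c - i' * c') ≤ q * n :=
    mul_le_mul_of_nonneg_left (by linarith) (by linarith)
  have h2 : q * (-(n - 1)) ≤ q * (i * c - i' * c') :=
    mul_le_mul_of_nonneg_left (by linarith) (by linarith)
  have h3 : M ≤ n * (q - 1) :=
    le_trans hMle (mul_le_mul_of_nonneg_right (by linarith) (by linarith))
  have key1 : q * n * d ≤ q * n := by linarith [hd, h1, hM0]
  have hd1 : d ≤ 1 := by
    by_contra hcon
    push_neg at hcon
    have h5 : q * n * 2 ≤ q * n * d :=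
      mul_le_mul_of_nonneg_left (by omega) (le_of_lt hqn)
    linarith
  have hrng : q * (-(n - 1)) - n * (q - 1) = -(q * n) * 2 + q + n := by ring
  have key2 : -(q * n) * 2 + q + n ≤ q * n * d := by linarith [hd, h2, h3, hrng]
  have hd2 : -1 ≤ d := by
    by_contra hcon
    push_neg at hcon
    have h5 : q * n * d ≤ q * n * (-2) :=
      mul_le_mul_of_nonneg_left (by omega) (le_of_lt hqn)
    have h6 : q * n * (-2) = -(q * n) * 2 := by ring
    linarith
  rcases (by omega : d = -1 ∨ d = 0 ∨ d = 1) with rfl | rfl | rfl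
  · -- d = -1 : impossible
    exfalso
    have e1 : q * n * (-1 : ℤ) = -(q * n) := by ring
    have e2 : q * (-i') ≤ q * (i * c - i' * c') :=
      mul_le_mul_of_nonneg_left (by linarith) (by linarith)
    have e3 : M ≤ (n - i') * (q - 1) :=
      le_trans hMle (mul_le_mul_of_nonneg_right (by linarith) (by linarith))
    have e4 : (n - i') * (q - 1) = q * n - n - q * i' + i' := by ring
    have e5 : q * (-i') = -(q * i') := by ring
    linarith
  · -- d = 0
    have e1 : q * n * (0 : ℤ) = 0 := by ring
    rcases (by omega : c = 0 ∨ c = 1) with rfl | rfl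
    · have e2 : q * (i * 0 - i' * c') = -(q * (i' * c')) := by ring
      have e3 : 0 ≤ q * (i' * c') := mul_nonneg (by linarith) hB0
      linarith
    · exfalso
      have e2 : q * (i - i') ≤ q * (i * 1 - i' * c') :=
        mul_le_mul_of_nonneg_left (by linarith) (by linarith)
      have e3 : q * (i - i') - (i - i') * (q - 1) = i - i' := by ring
      linarith
  · -- d = 1
    linarith [hd, h1, hM0]

lemma ins_unique_le (q n i i' : ℕ) (W Y Y' : ℕ → ℤ) (hq : 2 ≤ q) (hn : 1 ≤ n)
    (hii : i' ≤ i) (hi : i ≤ n)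
    (hbW : ∀ j, 0 ≤ W j ∧ W j < q)
    (hm : MergeRel q (n + 1) i W Y) (hm' : MergeRel q (n + 1) i' W Y')
    (hdvd : ((q : ℤ) * (n : ℤ)) ∣ (dterm q (n + 1) i W - dterm q (n + 1) i' W)) :
    ∀ j, Y j = Y' j := by
  rcases eq_or_lt_of_le hii with heqi | hlt
  · subst heqi
    intro j
    rcases lt_trichotomy (j + 1) i' with h | h | h
    · rw [hm.lt j h, hm'.lt j h]
    · rw [hm.mid j h, hm'.mid j h]
    · rw [hm.ge j (by omega), hm'.ge j (by omega)]
  · -- i' < i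
    have hu : dterm q (n + 1) i W - dterm q (n + 1) i' W
        = (q : ℤ) * ((i : ℤ) * car q i W - (i' : ℤ) * car q i' W)
          - ∑ k ∈ Finset.Ico i' i, W k := by
      rw [dterm, dterm,
        ← Finset.sum_Ico_consecutive W (by omega : i' ≤ i) (by omega : i ≤ n + 1)]
      ring
    obtain ⟨d, hd⟩ := hdvd
    rw [hu] at hd
    have hM : ∑ k ∈ Finset.Ico i' i, W k = 0 :=
      ins_arith (q : ℤ) (n : ℤ) (i : ℤ) (i' : ℤ) (car q i W) (car q i' W) _ d
        (by exact_mod_cast hq) (by exact_mod_cast hn) (by exact_mod_cast hi)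
        (by exact_mod_cast hlt) (Int.natCast_nonneg i')
        (car_nonneg _ _ _) (car_le_one _ _ _) (car_nonneg _ _ _) (car_le_one _ _ _)
        (Finset.sum_nonneg fun j _ => (hbW j).1)
        (sum_Ico_le q W hbW i' i (by omega)) hd
    have hzero : ∀ m, i' ≤ m → m < i → W m = 0 := fun m h1 h2 =>
      (Finset.sum_eq_zero_iff_of_nonneg fun j _ => (hbW j).1).mp hM m
        (Finset.mem_Ico.mpr ⟨h1, h2⟩)
    intro j
    rcases (by omega : j + 1 < i' ∨ j + 1 = i' ∨ (i' ≤ j ∧ j + 1 < i) ∨ j + 1 = i ∨ i ≤ j)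
      with h | h | ⟨h1, h2⟩ | h | h
    · rw [hm.lt j (by omega), hm'.lt j h]
    · rw [hm.lt j (by omega), hm'.mid j h,
        hzero (j + 1) (by omega) (by omega), add_zero,
        Int.emod_eq_of_lt (hbW j).1 (hbW j).2]
    · rw [hm.lt j (by omega), hm'.ge j h1, hzero j (by omega) (by omega),
        hzero (j + 1) (by omega) (by omega)]
    · rw [hm.mid j h, hm'.ge j (by omega), hzero j (by omega) (by omega), zero_add,
        Int.emod_eq_of_lt (hbW (j + 1)).1 (hbW (j + 1)).2]
    · rw [hm.ge j (by omega), hm'.ge j (by omega)]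

lemma ins_unique (q n i i' : ℕ) (W Y Y' : ℕ → ℤ) (hq : 2 ≤ q) (hn : 1 ≤ n)
    (hi : i ≤ n) (hi' : i' ≤ n)
    (hbW : ∀ j, 0 ≤ W j ∧ W j < q)
    (hm : MergeRel q (n + 1) i W Y) (hm' : MergeRel q (n + 1) i' W Y')
    (hdvd : ((q : ℤ) * (n : ℤ)) ∣ (dterm q (n + 1) i W - dterm q (n + 1) i' W)) :
    ∀ j, Y j = Y' j := by
  rcases le_total i' i with h | h
  · exact ins_unique_le q n i i' W Y Y' hq hn h hi hbW hm hm' hdvd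
  · intro j
    exact (ins_unique_le q n i' i W Y' Y hq hn h hi' hbW hm' hm
      (by rw [show dterm q (n + 1) i' W - dterm q (n + 1) i W
        = -(dterm q (n + 1) i W - dterm q (n + 1) i' W) by ring]
          exact hdvd.neg_right) j).symm


/-! ### List-level plumbing -/

def dfn (q : ℕ) (x : List ℕ) : ℕ → ℤ := fun j =>
  if j + 1 < x.length then ((x.getD j 0 : ℤ) - (x.getD (j + 1) 0 : ℤ)) % (q : ℤ)
  else (x.getD j 0 : ℤ)

lemma length_diffL (q : ℕ) (x : List ℕ) : (diffL q x).length = x.length := by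
  simp [diffL]

lemma getD_lt (q : ℕ) (x : List ℕ) (hxq : ∀ b ∈ x, b < q) (j : ℕ) (hj : j < x.length) :
    x.getD j 0 < q := by
  rw [List.getD_eq_getElem _ _ hj]
  exact hxq _ (List.getElem_mem hj)

lemma getD_diffL (q : ℕ) (x : List ℕ) (hq : 0 < q) (j : ℕ) (hj : j < x.length) :
    (((diffL q x).getD j 0 : ℕ) : ℤ) = dfn q x j := by
  have hq' : (q : ℤ) ≠ 0 := by exact_mod_cast (by omega : q ≠ 0)
  have hlen : j < (diffL q x).length := by rwa [length_diffL]
  rw [List.getD_eq_getElem _ _ hlen]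
  unfold diffL dfn
  erw [List.getElem_ofFn]
  split_ifs with h
  · exact Int.toNat_of_nonneg (Int.emod_nonneg _ hq')
  · rfl

lemma synL_diffL (q : ℕ) (x : List ℕ) (hq : 0 < q) :
    (synL (diffL q x) : ℤ) = Syn x.length (dfn q x) := by
  rw [synL, Syn, length_diffL]
  push_cast
  apply Finset.sum_congr rfl
  intro j hj
  rw [getD_diffL q x hq j (Finset.mem_range.mp hj)]

lemma dfn_bounds (q : ℕ) (x : List ℕ) (hq : 0 < q) (hxq : ∀ b ∈ x, b < q) :
    ∀ j, 0 ≤ dfn q x j ∧ dfn q x j < q := by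
  have hq' : (q : ℤ) ≠ 0 := by exact_mod_cast (by omega : q ≠ 0)
  have hqZ : (0 : ℤ) < q := by exact_mod_cast hq
  intro j
  unfold dfn
  split_ifs with h
  · exact ⟨Int.emod_nonneg _ hq', Int.emod_lt_of_pos _ hqZ⟩
  · by_cases hj : j < x.length
    · refine ⟨Int.natCast_nonneg _, ?_⟩
      exact_mod_cast getD_lt q x hxq j hj
    · rw [List.getD_eq_default _ _ (by omega)]
      exact ⟨le_refl 0, hqZ⟩

lemma dfn_pos (q : ℕ) (x : List ℕ) {j : ℕ} (h : j + 1 < x.length) :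
    dfn q x j = ((x.getD j 0 : ℤ) - (x.getD (j + 1) 0 : ℤ)) % (q : ℤ) := if_pos h

lemma dfn_neg (q : ℕ) (x : List ℕ) {j : ℕ} (h : ¬ (j + 1 < x.length)) :
    dfn q x j = (x.getD j 0 : ℤ) := if_neg h

lemma mergeRel_eraseIdx (q : ℕ) (x : List ℕ) (i : ℕ) (hq : 0 < q) (hi : i < x.length)
    (hxq : ∀ b ∈ x, b < q) :
    MergeRel q x.length i (dfn q x) (dfn q (x.eraseIdx i)) := by
  have hq' : (q : ℤ) ≠ 0 := by exact_mod_cast (by omega : q ≠ 0)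
  have hzlen : (x.eraseIdx i).length = x.length - 1 := by
    rw [List.length_eraseIdx, if_pos hi]
  have hzval : ∀ j, j < x.length - 1 →
      ((x.eraseIdx i).getD j 0 : ℤ)
        = if j < i then (x.getD j 0 : ℤ) else (x.getD (j + 1) 0 : ℤ) := by
    intro j hj
    rw [List.getD_eq_getElem _ _ (by omega), List.getElem_eraseIdx]
    by_cases h : j < i
    · rw [dif_pos h, if_pos h, List.getD_eq_getElem _ _ (by omega)]
    · rw [dif_neg h, if_neg h, List.getD_eq_getElem _ _ (by omega)]
  constructor
  · -- lt
    intro j hj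
    have e1 := hzval j (by omega)
    have e2 := hzval (j + 1) (by omega)
    rw [if_pos (by omega)] at e1
    rw [if_pos (by omega)] at e2
    rw [dfn_pos q (x.eraseIdx i) (by omega), dfn_pos q x (by omega), e1, e2]
  · -- mid
    intro j hj
    rcases (by omega : j + 2 < x.length ∨ j + 2 = x.length) with hc | hc
    · have e1 := hzval j (by omega)
      have e2 := hzval (j + 1) (by omega)
      rw [if_pos (by omega)] at e1
      rw [if_neg (by omega)] at e2
      rw [dfn_pos q (x.eraseIdx i) (by omega), dfn_pos q x (by omega),
        dfn_pos q x (show j + 1 + 1 < x.length by omega), e1, e2, ← Int.add_emod]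
      congr 1
      ring
    · -- deleting the last element
      have e1 := hzval j (by omega)
      rw [if_pos (by omega)] at e1
      rw [dfn_neg q (x.eraseIdx i) (by omega), dfn_pos q x (by omega),
        dfn_neg q x (show ¬ (j + 1 + 1 < x.length) by omega), e1, Int.emod_add_emod,
        show (x.getD j 0 : ℤ) - (x.getD (j + 1) 0 : ℤ) + (x.getD (j + 1) 0 : ℤ)
          = (x.getD j 0 : ℤ) by ring,
        Int.emod_eq_of_lt (Int.natCast_nonneg _)
          (by exact_mod_cast getD_lt q x hxq j (by omega))]
  · -- ge
    intro j hj
    rcases (by omega : j + 2 < x.length ∨ j + 2 = x.length ∨ x.length ≤ j + 1)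
      with hc | hc | hc
    · have e1 := hzval j (by omega)
      have e2 := hzval (j + 1) (by omega)
      rw [if_neg (by omega)] at e1
      rw [if_neg (by omega)] at e2
      rw [dfn_pos q (x.eraseIdx i) (by omega),
        dfn_pos q x (show j + 1 + 1 < x.length by omega), e1, e2]
    · have e1 := hzval j (by omega)
      rw [if_neg (by omega)] at e1
      rw [dfn_neg q (x.eraseIdx i) (by omega),
        dfn_neg q x (show ¬ (j + 1 + 1 < x.length) by omega), e1]
    · rw [dfn_neg q (x.eraseIdx i) (by omega),
        dfn_neg q x (show ¬ (j + 1 + 1 < x.length) by omega),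
        List.getD_eq_default _ _ (by omega), List.getD_eq_default _ _ (by omega)]

lemma getD_eq_sum_dfn (q : ℕ) (x : List ℕ) (hq : 0 < q) (hxq : ∀ b ∈ x, b < q) :
    ∀ t j, x.length = j + t + 1 →
      (x.getD j 0 : ℤ) = (∑ k ∈ Finset.Ico j x.length, dfn q x k) % q := by
  have hq' : (q : ℤ) ≠ 0 := by exact_mod_cast (by omega : q ≠ 0)
  intro t
  induction t with
  | zero =>
    intro j hj
    rw [hj, Finset.sum_Ico_eq_sum_range]
    simp only [show j + 1 - j = 1 by omega, Finset.sum_range_one]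
    have hdj : dfn q x (j + 0) = (x.getD j 0 : ℤ) := dfn_neg q x (by omega)
    rw [hdj, Int.emod_eq_of_lt (Int.natCast_nonneg _)
      (by exact_mod_cast getD_lt q x hxq j (by omega))]
  | succ t ih =>
    intro j hj
    have hsplit : ∑ k ∈ Finset.Ico j x.length, dfn q x k
        = dfn q x j + ∑ k ∈ Finset.Ico (j + 1) x.length, dfn q x k :=
      Finset.sum_eq_sum_Ico_succ_bot (by omega) _
    have hdj : dfn q x j = ((x.getD j 0 : ℤ) - (x.getD (j + 1) 0 : ℤ)) % q :=
      dfn_pos q x (by omega)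
    have hih := ih (j + 1) (by omega)
    set S := ∑ k ∈ Finset.Ico (j + 1) x.length, dfn q x k with hS
    rw [hsplit, hdj, Int.emod_add_emod]
    have e2 : ((x.getD j 0 : ℤ) - (x.getD (j + 1) 0 : ℤ) + S) % q
        = ((x.getD j 0 : ℤ) - (x.getD (j + 1) 0 : ℤ) + S % q) % q := by
      conv_lhs => rw [Int.add_emod]
      conv_rhs => rw [Int.add_emod]
      rw [Int.emod_emod_of_dvd _ dvd_rfl]
    rw [e2, ← hih,
      show (x.getD j 0 : ℤ) - (x.getD (j + 1) 0 : ℤ) + (x.getD (j + 1) 0 : ℤ)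
        = (x.getD j 0 : ℤ) by ring,
      Int.emod_eq_of_lt (Int.natCast_nonneg _)
        (by exact_mod_cast getD_lt q x hxq j (by omega))]

lemma eq_of_dfn_eq (q : ℕ) (x x' : List ℕ) (hq : 0 < q)
    (hxq : ∀ b ∈ x, b < q) (hx'q : ∀ b ∈ x', b < q) (hlen : x.length = x'.length)
    (h : ∀ j < x.length, dfn q x j = dfn q x' j) : x = x' := by
  apply List.ext_getElem hlen
  intro j h1 h2
  have hx := getD_eq_sum_dfn q x hq hxq (x.length - j - 1) j (by omega)
  have hx' := getD_eq_sum_dfn q x' hq hx'q (x'.length - j - 1) j (by omega)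
  have key : (x.getD j 0 : ℤ) = (x'.getD j 0 : ℤ) := by
    rw [hx, hx', ← hlen]
    congr 1
    exact Finset.sum_congr rfl fun k hk => h k (Finset.mem_Ico.mp hk).2
  rw [List.getD_eq_getElem _ _ h1, List.getD_eq_getElem _ _ h2] at key
  exact_mod_cast key

end VT14

open VT14 in
theorem stmt_14 (q n a : ℕ) (hq : 2 ≤ q) (hn : 1 ≤ n) (ha : a < q * n)
    (x x' : List ℕ)
    (hxlen : x.length = n) (hxq : ∀ b ∈ x, b < q)
    (hx'len : x'.length = n) (hx'q : ∀ b ∈ x', b < q)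
    (hxsyn : synL (diffL q x) % (q * n) = a)
    (hx'syn : synL (diffL q x') % (q * n) = a)
    (hne : x ≠ x') :
    inDelBall q x ∩ inDelBall q x' = ∅ := by
  rw [Set.eq_empty_iff_forall_notMem]
  rintro z ⟨⟨hzq, hz1⟩, ⟨-, hz2⟩⟩
  have hq0 : 0 < q := by omega
  have hinj : (∀ j < n, dfn q x j = dfn q x' j) → False := by
    intro h
    exact hne (eq_of_dfn_eq q x x' hq0 hxq hx'q (by rw [hxlen, hx'len])
      (fun j hj => h j (by omega)))
  have hSx : (synL (diffL q x) : ℤ) = Syn n (dfn q x) :=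
    (synL_diffL q x hq0).trans (by rw [hxlen])
  have hSx' : (synL (diffL q x') : ℤ) = Syn n (dfn q x') :=
    (synL_diffL q x' hq0).trans (by rw [hx'len])
  have hmodeq : Int.ModEq ((q : ℤ) * n) (Syn n (dfn q x)) (Syn n (dfn q x')) := by
    have h0 : synL (diffL q x) % (q * n) = synL (diffL q x') % (q * n) := by
      rw [hxsyn, hx'syn]
    have h1 := congrArg (fun m : ℕ => (m : ℤ)) h0
    push_cast at h1
    unfold Int.ModEq
    rw [← hSx, ← hSx']
    exact h1
  rcases hz1 with ⟨i, hi, rfl⟩ | ⟨i, hi, hxz⟩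
  · rcases hz2 with ⟨i', hi', hzz⟩ | ⟨i', hi', hzz⟩
    · -- both deletions
      have hin : i < n := by omega
      have hi'n : i' < n := by omega
      have hmx : MergeRel q n i (dfn q x) (dfn q (x.eraseIdx i)) := by
        have := mergeRel_eraseIdx q x i hq0 hi hxq
        rwa [hxlen] at this
      have hmx' : MergeRel q n i' (dfn q x') (dfn q (x.eraseIdx i)) := by
        have := mergeRel_eraseIdx q x' i' hq0 hi' hx'q
        rw [hx'len] at this
        rwa [← hzz] at this
      have hbx := dfn_bounds q x hq0 hxq
      have hbx' := dfn_bounds q x' hq0 hx'q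
      have e1 := syn_merge q n i (dfn q x) (dfn q (x.eraseIdx i)) hq0 hin hbx hmx
      have e2 := syn_merge q n i' (dfn q x') (dfn q (x.eraseIdx i)) hq0 hi'n hbx' hmx'
      have hdeq : dterm q n i (dfn q x) = dterm q n i' (dfn q x') := by
        have h3 := hmodeq.sub_right (Syn (n - 1) (dfn q (x.eraseIdx i)))
        have r1 : Syn n (dfn q x) - Syn (n - 1) (dfn q (x.eraseIdx i))
            = dterm q n i (dfn q x) := by rw [e1]; ring
        have r2 : Syn n (dfn q x') - Syn (n - 1) (dfn q (x.eraseIdx i))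
            = dterm q n i' (dfn q x') := by rw [e2]; ring
        rw [r1, r2] at h3
        have b1 := dterm_nonneg q n i (dfn q x) hbx
        have b2 := dterm_lt q n i (dfn q x) (by omega) hin hbx
        have b3 := dterm_nonneg q n i' (dfn q x') hbx'
        have b4 := dterm_lt q n i' (dfn q x') (by omega) hi'n hbx'
        calc dterm q n i (dfn q x)
            = dterm q n i (dfn q x) % ((q : ℤ) * n) := (Int.emod_eq_of_lt b1 b2).symm
          _ = dterm q n i' (dfn q x') % ((q : ℤ) * n) := h3
          _ = dterm q n i' (dfn q x') := Int.emod_eq_of_lt b3 b4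
      exact hinj (del_unique q n i i' _ _ _ hq hin hi'n hbx hbx' hmx hmx' hdeq)
    · -- deletion from x, insertion into x' : length contradiction
      have l1 : (x.eraseIdx i).length = n - 1 := by
        rw [List.length_eraseIdx, if_pos hi, hxlen]
      have l2 : x'.length = (x.eraseIdx i).length - 1 := by
        rw [hzz, List.length_eraseIdx, if_pos hi']
      omega
  · rcases hz2 with ⟨i', hi', hzz⟩ | ⟨i', hi', hzz⟩
    · -- insertion into x, deletion from x' : length contradiction
      have l1 : z.length = n - 1 := by
        rw [hzz, List.length_eraseIdx, if_pos hi', hx'len]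
      have l2 : x.length = z.length - 1 := by
        rw [hxz, List.length_eraseIdx, if_pos hi]
      omega
    · -- both insertions
      have hzlen : z.length = n + 1 := by
        have l2 : x.length = z.length - 1 := by
          rw [hxz, List.length_eraseIdx, if_pos hi]
        omega
      have hin : i ≤ n := by omega
      have hi'n : i' ≤ n := by omega
      have hbz := dfn_bounds q z hq0 hzq
      have hmz : MergeRel q (n + 1) i (dfn q z) (dfn q x) := by
        have := mergeRel_eraseIdx q z i hq0 hi hzq
        rwa [hzlen, ← hxz] at this
      have hmz' : MergeRel q (n + 1) i' (dfn q z) (dfn q x') := by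
        have := mergeRel_eraseIdx q z i' hq0 hi' hzq
        rwa [hzlen, ← hzz] at this
      have e1 := syn_merge q (n + 1) i (dfn q z) (dfn q x) hq0 (by omega) hbz hmz
      have e2 := syn_merge q (n + 1) i' (dfn q z) (dfn q x') hq0 (by omega) hbz hmz'
      rw [show n + 1 - 1 = n by omega] at e1 e2
      have hdvd : ((q : ℤ) * n)
          ∣ (dterm q (n + 1) i (dfn q z) - dterm q (n + 1) i' (dfn q z)) := by
        have h2 := Int.modEq_iff_dvd.mp hmodeq
        have r : Syn n (dfn q x') - Syn n (dfn q x)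
            = dterm q (n + 1) i (dfn q z) - dterm q (n + 1) i' (dfn q z) := by
          linarith [e1, e2]
        rwa [r] at h2
      have hall := ins_unique q n i i' (dfn q z) (dfn q x) (dfn q x') hq hn hin hi'n
        hbz hmz hmz' hdvd
      exact hinj fun j _ => hall j
end

section
/- Let q ≥ 4 and let x ∈ Σ_q^m and y ∈ Σ_q^k be arbitrary sequences. Consider z1 = x·2·1·3·y and z2 = x·1·3·2·y, the concatenations of x, the indicated three symbols, and y (both of length n = m+k+3). Then z1 ≠ z2, Syn(z1) = Syn(z2) (as integers, hence modulo any modulus), and the sequence z' = x·1·3·y of length n-1 can be obtained from z1 by deleting one coordinate and also from z2 by deleting one coordinate. Consequently, for any modulus M and residue a, the set {z ∈ Σ_q^n : Syn(z) ≡ a (mod M)} containing z1 and z2 is not a single-deletion-correcting code. -/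
lemma synL_append (a b : List ℕ) :
    synL (a ++ b) = synL a + a.length * b.sum + synL b := by
  induction a with
  | nil => simp [synL]
  | cons c t ih =>
    rw [List.cons_append, synL_cons, ih, synL_cons, List.sum_append,
      List.length_cons]
    ring

theorem stmt_16 (q : ℕ) (hq : 4 ≤ q) (x y : List ℕ)
    (hx : ∀ b ∈ x, b < q) (hy : ∀ b ∈ y, b < q) :
    let z1 := x ++ [2, 1, 3] ++ y
    let z2 := x ++ [1, 3, 2] ++ y
    let z' := x ++ [1, 3] ++ y
    z1 ≠ z2 ∧ synL z1 = synL z2 ∧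
    (∃ i < z1.length, z' = z1.eraseIdx i) ∧
    (∃ i < z2.length, z' = z2.eraseIdx i) ∧
    ∀ M a : ℕ, synL z1 % M = a →
      ¬ (∀ u v : List ℕ,
          u.length = z1.length → (∀ b ∈ u, b < q) → synL u % M = a →
          v.length = z1.length → (∀ b ∈ v, b < q) → synL v % M = a →
          u ≠ v →
          ¬ ∃ w : List ℕ,
              (∃ i < u.length, w = u.eraseIdx i) ∧ (∃ i < v.length, w = v.eraseIdx i)) := by
  intro z1 z2 z'
  have hne : z1 ≠ z2 := by
    intro h
    rw [show z1 = x ++ ([2,1,3] ++ y) from List.append_assoc .. ,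
      show z2 = x ++ ([1,3,2] ++ y) from List.append_assoc ..] at h
    have h2 := List.append_cancel_left h
    simp at h2
  have hsyn : synL z1 = synL z2 := by
    simp only [z1, z2, List.append_assoc]
    rw [synL_append, synL_append, synL_append, synL_append]
    rw [List.sum_append, List.sum_append]
    norm_num [synL, Finset.sum_range_succ]
  have hlen1 : z1.length = x.length + 3 + y.length := by simp [z1]; omega
  have hlen2 : z2.length = x.length + 3 + y.length := by simp [z2]; omega
  have he1 : ∃ i < z1.length, z' = z1.eraseIdx i := by
    refine ⟨x.length, by omega, ?_⟩
    simp only [z1, z', List.append_assoc]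
    rw [List.eraseIdx_append_of_length_le le_rfl]
    simp [List.append_assoc]
  have he2 : ∃ i < z2.length, z' = z2.eraseIdx i := by
    refine ⟨x.length + 2, by omega, ?_⟩
    simp only [z2, z', List.append_assoc]
    rw [List.eraseIdx_append_of_length_le (by omega)]
    have : (x.length + 2) - x.length = 2 := by omega
    rw [this]
    simp [List.append_assoc, List.eraseIdx]
  refine ⟨hne, hsyn, he1, he2, ?_⟩
  intro M a ha h
  have hz1q : ∀ b ∈ z1, b < q := by
    intro b hb
    simp only [z1, List.mem_append, List.mem_cons] at hb
    rcases hb with (hb | hb) | hb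
    · exact hx b hb
    · simp at hb; rcases hb with h | h | h <;> omega
    · exact hy b hb
  have hz2q : ∀ b ∈ z2, b < q := by
    intro b hb
    simp only [z2, List.mem_append, List.mem_cons] at hb
    rcases hb with (hb | hb) | hb
    · exact hx b hb
    · simp at hb; rcases hb with h | h | h <;> omega
    · exact hy b hb
  exact h z1 z2 rfl hz1q ha (by omega) hz2q (by rw [← hsyn]; exact ha) hne
    ⟨z', he1, he2⟩
end

section
/- Let q ≥ 2, n ≥ 1, and let p be an integer with 1 ≤ p ≤ q-1 and gcd(p,q) = 1. Define the p-transformation Γ_p(x) ∈ Σ_q^n of x ∈ Σ_q^n by Γ_p(x)_i = p·(x_i - x_{i+1}) (mod q) for 1 ≤ i ≤ n-1 and Γ_p(x)_n = p·x_n (mod q). Then for every a ∈ ℤ_{qn}, the code {x ∈ Σ_q^n : Syn(Γ_p(x)) ≡ a (mod qn)} corrects a single deletion: for any two distinct codewords x, x̃, no sequence z ∈ Σ_q^{n-1} can be obtained both from x by deleting one coordinate and from x̃ by deleting one coordinate. -/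
/-- `p`-transformation vector: `Γ_p(x)_i = p(x_i - x_{i+1}) (mod q)` for `i < n`, and
`Γ_p(x)_n = p·x_n (mod q)`. -/
def gammaL (q p : ℕ) (x : List ℕ) : List ℕ :=
  List.ofFn fun i : Fin x.length =>
    if i.1 + 1 < x.length then
      (((p : ℤ) * ((x.getD i.1 0 : ℤ) - (x.getD (i.1 + 1) 0 : ℤ))) % (q : ℤ)).toNat
    else (p * x.getD i.1 0) % q


lemma gammaL_length (q p : ℕ) (x : List ℕ) : (gammaL q p x).length = x.length := by
  simp [gammaL]

lemma emod_sub_self_dvd (a q : ℤ) : q ∣ a % q - a := by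
  have : (a % q - a) % q = 0 := by simp [Int.sub_emod]
  exact Int.dvd_of_emod_eq_zero this

lemma gammaL_getD_mid (q p : ℕ) (hq : 0 < q) (x : List ℕ) (i : ℕ) (hi : i + 1 < x.length) :
    ((gammaL q p x).getD i 0 : ℤ) =
      ((p : ℤ) * ((x.getD i 0 : ℤ) - (x.getD (i + 1) 0 : ℤ))) % (q : ℤ) := by
  have hlen : i < (gammaL q p x).length := by rw [gammaL_length]; omega
  rw [List.getD_eq_getElem _ _ hlen]
  simp only [gammaL, List.getElem_ofFn]
  rw [if_pos hi]
  exact Int.toNat_of_nonneg (Int.emod_nonneg _ (by exact_mod_cast hq.ne'))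

lemma gammaL_getD_last (q p : ℕ) (x : List ℕ) (i : ℕ) (hi : i + 1 = x.length) :
    ((gammaL q p x).getD i 0 : ℤ) = ((p : ℤ) * (x.getD i 0 : ℤ)) % (q : ℤ) := by
  have hlen : i < (gammaL q p x).length := by rw [gammaL_length]; omega
  rw [List.getD_eq_getElem _ _ hlen]
  simp only [gammaL, List.getElem_ofFn]
  rw [if_neg (by omega)]
  push_cast
  ring_nf

lemma gammaL_getD_lt (q p : ℕ) (hq : 0 < q) (x : List ℕ) (i : ℕ) (hi : i < x.length) :
    (gammaL q p x).getD i 0 < q := by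
  rcases lt_or_ge (i + 1) x.length with h | h
  · have h1 := gammaL_getD_mid q p hq x i h
    have h2 : ((p : ℤ) * ((x.getD i 0 : ℤ) - (x.getD (i + 1) 0 : ℤ))) % (q : ℤ) < q :=
      Int.emod_lt_of_pos _ (by exact_mod_cast hq)
    omega
  · have hi' : i + 1 = x.length := by omega
    have hlen : i < (gammaL q p x).length := by rw [gammaL_length]; omega
    rw [List.getD_eq_getElem _ _ hlen]
    simp only [gammaL, List.getElem_ofFn]
    rw [if_neg (by omega)]
    exact Nat.mod_lt _ hq

lemma eraseIdx_getD_lt (x : List ℕ) (k j : ℕ) (hk : k < x.length) (hj : j < k) :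
    (x.eraseIdx k).getD j 0 = x.getD j 0 := by
  have hlen : (x.eraseIdx k).length = x.length - 1 := by
    rw [List.length_eraseIdx]; simp [hk]
  have hj1 : j < (x.eraseIdx k).length := by omega
  rw [List.getD_eq_getElem _ _ hj1, List.getD_eq_getElem _ _ (by omega : j < x.length)]
  rw [List.getElem_eraseIdx]
  simp [hj]

lemma eraseIdx_getD_ge (x : List ℕ) (k j : ℕ) (hk : k < x.length) (hjk : k ≤ j)
    (hj : j + 1 < x.length) :
    (x.eraseIdx k).getD j 0 = x.getD (j + 1) 0 := by
  have hlen : (x.eraseIdx k).length = x.length - 1 := by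
    rw [List.length_eraseIdx]; simp [hk]
  have hj1 : j < (x.eraseIdx k).length := by omega
  rw [List.getD_eq_getElem _ _ hj1, List.getD_eq_getElem _ _ (by omega : j + 1 < x.length)]
  rw [List.getElem_eraseIdx]
  rw [dif_neg (by omega)]

lemma synL_int (l : List ℕ) :
    (synL l : ℤ) = ∑ i ∈ Finset.range l.length, ((i : ℤ) + 1) * (l.getD i 0 : ℤ) := by
  unfold synL
  push_cast
  rfl

section Struct
variable (q p : ℕ)

lemma gamma_erase_lt (hq : 0 < q) (x : List ℕ) (k j : ℕ) (hk : k < x.length) (hj : j + 1 < k) :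
    (gammaL q p (x.eraseIdx k)).getD j 0 = (gammaL q p x).getD j 0 := by
  have hlen : (x.eraseIdx k).length = x.length - 1 := by
    rw [List.length_eraseIdx]; simp [hk]
  have h1 : j + 1 < (x.eraseIdx k).length := by omega
  have h2 : j + 1 < x.length := by omega
  have := gammaL_getD_mid q p hq (x.eraseIdx k) j h1
  have h4 := gammaL_getD_mid q p hq x j h2
  rw [eraseIdx_getD_lt x k j hk (by omega), eraseIdx_getD_lt x k (j+1) hk (by omega)] at this
  exact_mod_cast this.trans h4.symm

lemma gamma_erase_ge (hq : 0 < q) (x : List ℕ) (k j : ℕ) (hk : k < x.length) (hjk : k ≤ j)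
    (hj : j < x.length - 1) :
    (gammaL q p (x.eraseIdx k)).getD j 0 = (gammaL q p x).getD (j + 1) 0 := by
  have hlen : (x.eraseIdx k).length = x.length - 1 := by
    rw [List.length_eraseIdx]; simp [hk]
  rcases lt_or_ge (j + 1) (x.length - 1) with h | h
  · have h1 : j + 1 < (x.eraseIdx k).length := by omega
    have h2 : (j + 1) + 1 < x.length := by omega
    have h3 := gammaL_getD_mid q p hq (x.eraseIdx k) j h1
    have h4 := gammaL_getD_mid q p hq x (j+1) h2
    rw [eraseIdx_getD_ge x k j hk hjk (by omega),
        eraseIdx_getD_ge x k (j+1) hk (by omega) (by omega)] at h3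
    exact_mod_cast h3.trans h4.symm
  · have h1 : j + 1 = (x.eraseIdx k).length := by omega
    have h2 : (j + 1) + 1 = x.length := by omega
    have h3 := gammaL_getD_last q p (x.eraseIdx k) j h1
    have h4 := gammaL_getD_last q p x (j+1) h2
    rw [eraseIdx_getD_ge x k j hk hjk (by omega)] at h3
    exact_mod_cast h3.trans h4.symm

lemma gamma_erase_merge_dvd (hq : 0 < q) (x : List ℕ) (k : ℕ) (hk1 : 1 ≤ k) (hk : k < x.length) :
    (q : ℤ) ∣ ((gammaL q p (x.eraseIdx k)).getD (k - 1) 0 : ℤ) -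
      (((gammaL q p x).getD (k - 1) 0 : ℤ) + ((gammaL q p x).getD k 0 : ℤ)) := by
  have hlen : (x.eraseIdx k).length = x.length - 1 := by
    rw [List.length_eraseIdx]; simp [hk]
  have hky : (k - 1) + 1 < x.length := by omega
  have hy1 := gammaL_getD_mid q p hq x (k-1) hky
  rw [(by omega : k - 1 + 1 = k)] at hy1
  rcases lt_or_ge (k + 1) x.length with h | h
  · -- merged entry is a "middle" entry of z
    have h1 : (k - 1) + 1 < (x.eraseIdx k).length := by omega
    have hw := gammaL_getD_mid q p hq (x.eraseIdx k) (k-1) h1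
    rw [(by omega : k - 1 + 1 = k)] at hw
    rw [eraseIdx_getD_lt x k (k-1) hk (by omega),
        eraseIdx_getD_ge x k k hk le_rfl (by omega)] at hw
    have hy2 := gammaL_getD_mid q p hq x k h
    rw [hw, hy1, hy2]
    set A : ℤ := (p : ℤ) * ((x.getD (k-1) 0 : ℤ) - (x.getD (k+1) 0 : ℤ)) with hA
    set B : ℤ := (p : ℤ) * ((x.getD (k-1) 0 : ℤ) - (x.getD k 0 : ℤ)) with hB
    set C : ℤ := (p : ℤ) * ((x.getD k 0 : ℤ) - (x.getD (k+1) 0 : ℤ)) with hC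
    have key : A % q - (B % q + C % q) =
        (A % q - A) - (B % q - B) - (C % q - C) := by rw [hA, hB, hC]; ring
    rw [key]
    exact dvd_sub (dvd_sub (emod_sub_self_dvd A q) (emod_sub_self_dvd B q))
      (emod_sub_self_dvd C q)
  · -- k = x.length - 1 : merged entry is the last entry of z
    have h1 : (k - 1) + 1 = (x.eraseIdx k).length := by omega
    have hw := gammaL_getD_last q p (x.eraseIdx k) (k-1) h1
    rw [eraseIdx_getD_lt x k (k-1) hk (by omega)] at hw
    have hy2 := gammaL_getD_last q p x k (by omega)
    rw [hw, hy1, hy2]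
    set A : ℤ := (p : ℤ) * (x.getD (k-1) 0 : ℤ) with hA
    set B : ℤ := (p : ℤ) * ((x.getD (k-1) 0 : ℤ) - (x.getD k 0 : ℤ)) with hB
    set C : ℤ := (p : ℤ) * (x.getD k 0 : ℤ) with hC
    have key : A % q - (B % q + C % q) =
        (A % q - A) - (B % q - B) - (C % q - C) := by rw [hA, hB, hC]; ring
    rw [key]
    exact dvd_sub (dvd_sub (emod_sub_self_dvd A q) (emod_sub_self_dvd B q))
      (emod_sub_self_dvd C q)

lemma gamma_erase_merge (hq : 0 < q) (x : List ℕ) (k : ℕ) (hk1 : 1 ≤ k) (hk : k < x.length) :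
    ((gammaL q p (x.eraseIdx k)).getD (k - 1) 0 : ℤ) =
      ((gammaL q p x).getD (k - 1) 0 : ℤ) + ((gammaL q p x).getD k 0 : ℤ) -
      q * (if (q : ℤ) ≤ ((gammaL q p x).getD (k - 1) 0 : ℤ) + ((gammaL q p x).getD k 0 : ℤ)
        then 1 else 0) := by
  have hlen : (x.eraseIdx k).length = x.length - 1 := by
    rw [List.length_eraseIdx]; simp [hk]
  obtain ⟨c, hc⟩ := gamma_erase_merge_dvd q p hq x k hk1 hk
  have hqZ : (0 : ℤ) < (q : ℤ) := by exact_mod_cast hq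
  set w : ℤ := ((gammaL q p (x.eraseIdx k)).getD (k - 1) 0 : ℤ) with hwdef
  set y1 : ℤ := ((gammaL q p x).getD (k - 1) 0 : ℤ) with hy1def
  set y2 : ℤ := ((gammaL q p x).getD k 0 : ℤ) with hy2def
  have hw0 : 0 ≤ w := by positivity
  have hwq : w < q := by
    have := gammaL_getD_lt q p hq (x.eraseIdx k) (k-1) (by omega)
    rw [hwdef]; exact_mod_cast this
  have hy10 : 0 ≤ y1 := by positivity
  have hy1q : y1 < q := by
    have := gammaL_getD_lt q p hq x (k-1) (by omega)
    rw [hy1def]; exact_mod_cast this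
  have hy20 : 0 ≤ y2 := by positivity
  have hy2q : y2 < q := by
    have := gammaL_getD_lt q p hq x k hk
    rw [hy2def]; exact_mod_cast this
  have hcval : c = -1 ∨ c = 0 := by
    have h1 : (q : ℤ) * c < (q : ℤ) * 1 := by nlinarith
    have h2 : (q : ℤ) * (-2) < (q : ℤ) * c := by nlinarith
    have h3 : c < 1 := lt_of_mul_lt_mul_left h1 (le_of_lt hqZ)
    have h4 : (-2 : ℤ) < c := lt_of_mul_lt_mul_left h2 (le_of_lt hqZ)
    omega
  rcases hcval with rfl | rfl
  · rw [if_pos (by nlinarith)]; linarith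
  · rw [if_neg (by push_neg; nlinarith)]; linarith

end Struct

lemma sum_shuffle (n k : ℕ) (hk : k < n) (y w : ℕ → ℤ) (E : ℤ)
    (h1 : ∀ j, j + 1 < k → w j = y j)
    (h2 : ∀ j, k ≤ j → j < n - 1 → w j = y (j + 1))
    (h3 : 1 ≤ k → w (k - 1) = y (k - 1) + y k - E) :
    ∑ i ∈ Finset.range n, ((i : ℤ) + 1) * y i =
      ∑ j ∈ Finset.range (n - 1), ((j : ℤ) + 1) * w j + y k
      + ∑ j ∈ Finset.Ico k (n - 1), w j + (k : ℤ) * E := by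
  have hm : n - 1 + 1 = n := by omega
  simp only [Finset.range_eq_Ico]
  have hy_split : ∑ i ∈ Finset.Ico 0 n, ((i : ℤ) + 1) * y i
      = ∑ i ∈ Finset.Ico 0 k, ((i : ℤ) + 1) * y i + ((k : ℤ) + 1) * y k
        + ∑ i ∈ Finset.Ico (k + 1) n, ((i : ℤ) + 1) * y i := by
    rw [← Finset.sum_Ico_consecutive _ (Nat.zero_le (k + 1)) (by omega : k + 1 ≤ n),
        Finset.sum_Ico_succ_top (Nat.zero_le k)]
  have hw_split : ∑ j ∈ Finset.Ico 0 (n - 1), ((j : ℤ) + 1) * w j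
      = ∑ j ∈ Finset.Ico 0 k, ((j : ℤ) + 1) * w j
        + ∑ j ∈ Finset.Ico k (n - 1), ((j : ℤ) + 1) * w j :=
    (Finset.sum_Ico_consecutive _ (Nat.zero_le k) (by omega)).symm
  have hA : ∑ j ∈ Finset.Ico 0 k, ((j : ℤ) + 1) * w j
      = ∑ j ∈ Finset.Ico 0 k, ((j : ℤ) + 1) * y j + (k : ℤ) * y k - (k : ℤ) * E := by
    rcases Nat.eq_zero_or_pos k with rfl | hk1
    · simp
    · obtain ⟨t, rfl⟩ : ∃ t, k = t + 1 := ⟨k - 1, by omega⟩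
      rw [Finset.sum_Ico_succ_top (Nat.zero_le t), Finset.sum_Ico_succ_top (Nat.zero_le t)]
      have hwt : w t = y t + y (t + 1) - E := by
        have := h3 (by omega); simpa using this
      have hcongr : ∑ j ∈ Finset.Ico 0 t, ((j : ℤ) + 1) * w j
          = ∑ j ∈ Finset.Ico 0 t, ((j : ℤ) + 1) * y j := by
        refine Finset.sum_congr rfl fun j hj => ?_
        simp only [Finset.mem_Ico] at hj
        rw [h1 j (by omega)]
      rw [hcongr, hwt]
      push_cast
      ring
  have hB : ∑ j ∈ Finset.Ico k (n - 1), ((j : ℤ) + 1) * w j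
      = ∑ i ∈ Finset.Ico (k + 1) n, (i : ℤ) * y i := by
    have e1 : ∀ j ∈ Finset.Ico k (n - 1), ((j : ℤ) + 1) * w j
        = (fun i : ℕ => (i : ℤ) * y i) (j + 1) := by
      intro j hj; simp only [Finset.mem_Ico] at hj
      rw [h2 j hj.1 hj.2]; push_cast; ring
    rw [Finset.sum_congr rfl e1, Finset.sum_Ico_add' (fun i : ℕ => (i : ℤ) * y i) k (n - 1) 1, hm]
  have hC : ∑ j ∈ Finset.Ico k (n - 1), w j = ∑ i ∈ Finset.Ico (k + 1) n, y i := by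
    have e1 : ∀ j ∈ Finset.Ico k (n - 1), w j = (fun i => y i) (j + 1) := by
      intro j hj; simp only [Finset.mem_Ico] at hj
      exact h2 j hj.1 hj.2
    rw [Finset.sum_congr rfl e1, Finset.sum_Ico_add' (fun i => y i) k (n - 1) 1, hm]
  have hD : ∑ i ∈ Finset.Ico (k + 1) n, ((i : ℤ) + 1) * y i
      = ∑ i ∈ Finset.Ico (k + 1) n, (i : ℤ) * y i + ∑ i ∈ Finset.Ico (k + 1) n, y i := by
    rw [← Finset.sum_add_distrib]
    exact Finset.sum_congr rfl fun i _ => by ring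
  rw [hy_split, hw_split, hA, hB, hC, hD]
  ring

lemma syn_eraseIdx (q p : ℕ) (hq : 0 < q) (x : List ℕ) (k : ℕ) (hk : k < x.length) :
    (synL (gammaL q p x) : ℤ) =
      (synL (gammaL q p (x.eraseIdx k)) : ℤ) + ((gammaL q p x).getD k 0 : ℤ)
      + ∑ j ∈ Finset.Ico k (x.length - 1), ((gammaL q p (x.eraseIdx k)).getD j 0 : ℤ)
      + (k : ℤ) * ((q : ℤ) *
        (if (q : ℤ) ≤ ((gammaL q p x).getD (k - 1) 0 : ℤ) + ((gammaL q p x).getD k 0 : ℤ)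
          then 1 else 0)) := by
  have hlen : (x.eraseIdx k).length = x.length - 1 := by
    rw [List.length_eraseIdx]; simp [hk]
  rw [synL_int, synL_int, gammaL_length, gammaL_length, hlen]
  exact sum_shuffle x.length k hk
    (fun i => ((gammaL q p x).getD i 0 : ℤ))
    (fun j => ((gammaL q p (x.eraseIdx k)).getD j 0 : ℤ))
    ((q : ℤ) * (if (q : ℤ) ≤ ((gammaL q p x).getD (k - 1) 0 : ℤ) + ((gammaL q p x).getD k 0 : ℤ)
      then 1 else 0))
    (fun j hj => by simpa using congrArg (Nat.cast : ℕ → ℤ) (gamma_erase_lt q p hq x k j hk hj))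
    (fun j hjk hj => by
      simpa using congrArg (Nat.cast : ℕ → ℤ) (gamma_erase_ge q p hq x k j hk hjk hj))
    (fun hk1 => gamma_erase_merge q p hq x k hk1 hk)

lemma mem_lt_of_getD {x : List ℕ} {q i : ℕ} (hxq : ∀ b ∈ x, b < q) (hi : i < x.length) :
    x.getD i 0 < q := by
  rw [List.getD_eq_getElem _ _ hi]
  exact hxq _ (List.getElem_mem hi)

lemma gammaL_inj (q p : ℕ) (hq : 0 < q) (hpq : Nat.gcd p q = 1)
    (x x' : List ℕ) (hlen : x'.length = x.length)
    (hxq : ∀ b ∈ x, b < q) (hx'q : ∀ b ∈ x', b < q)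
    (hy : ∀ i, i < x.length → (gammaL q p x).getD i 0 = (gammaL q p x').getD i 0) :
    x = x' := by
  have hcop : IsCoprime (q : ℤ) (p : ℤ) := by
    rw [Int.isCoprime_iff_gcd_eq_one, Int.gcd_natCast_natCast, Nat.gcd_comm]; exact hpq
  have hcancel : ∀ a b : ℕ, a < q → b < q → (q : ℤ) ∣ (p : ℤ) * ((a : ℤ) - (b : ℤ)) → a = b := by
    intro a b ha hb hd
    have h2 : (q : ℤ) ∣ ((a : ℤ) - (b : ℤ)) := hcop.dvd_of_dvd_mul_left hd
    have haz : (a : ℤ) < q := by exact_mod_cast ha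
    have hbz : (b : ℤ) < q := by exact_mod_cast hb
    have ha0 : (0 : ℤ) ≤ a := by positivity
    have hb0 : (0 : ℤ) ≤ b := by positivity
    have h3 : (a : ℤ) - b = 0 :=
      Int.eq_zero_of_abs_lt_dvd h2 (abs_lt.mpr ⟨by linarith, by linarith⟩)
    have : (a : ℤ) = b := by linarith
    exact_mod_cast this
  have main : ∀ d i, x.length = i + 1 + d → x.getD i 0 = x'.getD i 0 := by
    intro d
    induction d with
    | zero =>
      intro i hi
      have hix : i < x.length := by omega
      have hix' : i < x'.length := by omega
      have hA := gammaL_getD_last q p x i (by omega)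
      have hB := gammaL_getD_last q p x' i (by omega)
      have hyy : ((gammaL q p x).getD i 0 : ℤ) = ((gammaL q p x').getD i 0 : ℤ) := by
        exact_mod_cast congrArg (Nat.cast : ℕ → ℤ) (hy i hix)
      rw [hA, hB] at hyy
      set A : ℤ := (p : ℤ) * (x.getD i 0 : ℤ) with hAd
      set B : ℤ := (p : ℤ) * (x'.getD i 0 : ℤ) with hBd
      have h5 : (q : ℤ) ∣ A - B := by
        have h6 := dvd_sub (emod_sub_self_dvd B q) (emod_sub_self_dvd A q)
        rw [hyy] at h6
        rw [show A - B = B % (q : ℤ) - B - (B % (q : ℤ) - A) by ring]; exact h6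
      have h7 : (q : ℤ) ∣ (p : ℤ) * ((x.getD i 0 : ℤ) - (x'.getD i 0 : ℤ)) := by
        convert h5 using 1; rw [hAd, hBd]; ring
      exact hcancel _ _ (mem_lt_of_getD hxq hix) (mem_lt_of_getD hx'q hix') h7
    | succ d ih =>
      intro i hi
      have hix : i + 1 < x.length := by omega
      have hix' : i + 1 < x'.length := by omega
      have hIH : x.getD (i + 1) 0 = x'.getD (i + 1) 0 := ih (i + 1) (by omega)
      have hA := gammaL_getD_mid q p hq x i hix
      have hB := gammaL_getD_mid q p hq x' i hix'
      have hyy : ((gammaL q p x).getD i 0 : ℤ) = ((gammaL q p x').getD i 0 : ℤ) := by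
        exact_mod_cast congrArg (Nat.cast : ℕ → ℤ) (hy i (by omega))
      rw [hA, hB, hIH] at hyy
      set A : ℤ := (p : ℤ) * ((x.getD i 0 : ℤ) - (x'.getD (i + 1) 0 : ℤ)) with hAd
      set B : ℤ := (p : ℤ) * ((x'.getD i 0 : ℤ) - (x'.getD (i + 1) 0 : ℤ)) with hBd
      have h5 : (q : ℤ) ∣ A - B := by
        have h6 := dvd_sub (emod_sub_self_dvd B q) (emod_sub_self_dvd A q)
        rw [hyy] at h6
        rw [show A - B = B % (q : ℤ) - B - (B % (q : ℤ) - A) by ring]; exact h6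
      have h7 : (q : ℤ) ∣ (p : ℤ) * ((x.getD i 0 : ℤ) - (x'.getD i 0 : ℤ)) := by
        convert h5 using 1; rw [hAd, hBd]; ring
      exact hcancel _ _ (mem_lt_of_getD hxq (by omega)) (mem_lt_of_getD hx'q (by omega)) h7
  refine List.ext_getElem hlen.symm fun i h1 h2 => ?_
  have := main (x.length - i - 1) i (by omega)
  rwa [List.getD_eq_getElem _ _ h1, List.getD_eq_getElem _ _ h2] at this

set_option maxHeartbeats 2000000 in
lemma case_analysis (q n k k' : ℕ) (Y Y' W : ℕ → ℤ) (ε ε' : ℤ)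
    (hq : 2 ≤ q) (hk : k < n) (hk' : k' < n) (hkk' : k ≤ k')
    (hYb : ∀ i, i < n → 0 ≤ Y i ∧ Y i < q)
    (hY'b : ∀ i, i < n → 0 ≤ Y' i ∧ Y' i < q)
    (hWb : ∀ j, j < n - 1 → 0 ≤ W j ∧ W j < q)
    (hεb : ε = 0 ∨ ε = 1) (hε'b : ε' = 0 ∨ ε' = 1)
    (R1 : ∀ j, j + 1 < k → W j = Y j)
    (R2 : ∀ j, k ≤ j → j < n - 1 → W j = Y (j + 1))
    (R3 : 1 ≤ k → W (k - 1) = Y (k - 1) + Y k - q * ε)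
    (R1' : ∀ j, j + 1 < k' → W j = Y' j)
    (R2' : ∀ j, k' ≤ j → j < n - 1 → W j = Y' (j + 1))
    (R3' : 1 ≤ k' → W (k' - 1) = Y' (k' - 1) + Y' k' - q * ε')
    (hsyn : ((q : ℤ) * n) ∣ (Y k + ∑ j ∈ Finset.Ico k (n - 1), W j + k * (q * ε))
      - (Y' k' + ∑ j ∈ Finset.Ico k' (n - 1), W j + k' * (q * ε'))) :
    ∀ i, i < n → Y i = Y' i := by
  have hqZ : (2 : ℤ) ≤ q := by exact_mod_cast hq
  have hkZ : ((k : ℤ)) < n := by exact_mod_cast hk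
  have hk'Z : ((k' : ℤ)) < n := by exact_mod_cast hk'
  have hkk'Z : ((k : ℤ)) ≤ k' := by exact_mod_cast hkk'
  have hk0 : (0 : ℤ) ≤ k := by positivity
  have hk'0 : (0 : ℤ) ≤ k' := by positivity
  have hε01 : 0 ≤ ε ∧ ε ≤ 1 := by rcases hεb with rfl | rfl <;> norm_num
  have hε'01 : 0 ≤ ε' ∧ ε' ≤ 1 := by rcases hε'b with rfl | rfl <;> norm_num
  have hsplit : ∑ j ∈ Finset.Ico k (n - 1), W j
      = ∑ j ∈ Finset.Ico k k', W j + ∑ j ∈ Finset.Ico k' (n - 1), W j :=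
    (Finset.sum_Ico_consecutive W hkk' (by omega)).symm
  have hS0 : 0 ≤ ∑ j ∈ Finset.Ico k k', W j :=
    Finset.sum_nonneg fun j hj => (hWb j (by simp only [Finset.mem_Ico] at hj; omega)).1
  have hS1 : ∑ j ∈ Finset.Ico k k', W j ≤ ((k' : ℤ) - k) * ((q : ℤ) - 1) := by
    have h1 := Finset.sum_le_card_nsmul (Finset.Ico k k') W ((q : ℤ) - 1)
      (fun j hj => by
        have := (hWb j (by simp only [Finset.mem_Ico] at hj; omega)).2; linarith)
    rw [Nat.card_Ico, nsmul_eq_mul] at h1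
    have hcast : ((k' - k : ℕ) : ℤ) = (k' : ℤ) - k := by omega
    rwa [hcast] at h1
  have hA0 : 0 ≤ (k : ℤ) * ((q : ℤ) * ε) :=
    mul_nonneg hk0 (mul_nonneg (by linarith) hε01.1)
  have hA1 : (k : ℤ) * ((q : ℤ) * ε) ≤ (k : ℤ) * q := by
    nlinarith [mul_nonneg (mul_nonneg hk0 (show (0:ℤ) ≤ (q:ℤ) by linarith))
      (show (0:ℤ) ≤ 1 - ε by linarith [hε01.2])]
  have hB0 : 0 ≤ (k' : ℤ) * ((q : ℤ) * ε') :=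
    mul_nonneg hk'0 (mul_nonneg (by linarith) hε'01.1)
  have hB1 : (k' : ℤ) * ((q : ℤ) * ε') ≤ (k' : ℤ) * q := by
    nlinarith [mul_nonneg (mul_nonneg hk'0 (show (0:ℤ) ≤ (q:ℤ) by linarith))
      (show (0:ℤ) ≤ 1 - ε' by linarith [hε'01.2])]
  have hYk := hYb k hk
  have hY'k' := hY'b k' hk'
  have hE0 : Y k + ∑ j ∈ Finset.Ico k k', W j + (k : ℤ) * ((q : ℤ) * ε)
      = Y' k' + (k' : ℤ) * ((q : ℤ) * ε') := by
    have hD0 : (Y k + ∑ j ∈ Finset.Ico k (n - 1), W j + k * (q * ε))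
        - (Y' k' + ∑ j ∈ Finset.Ico k' (n - 1), W j + k' * (q * ε')) = 0 := by
      have P1 : 0 ≤ (q : ℤ) * ((n : ℤ) - 1 - k') :=
        mul_nonneg (by linarith) (by linarith)
      refine Int.eq_zero_of_abs_lt_dvd hsyn (abs_lt.mpr ⟨?_, ?_⟩)
      · rw [hsplit]
        linarith [P1, hYk.1, hYk.2, hY'k'.1, hY'k'.2, hS0, hS1, hA0, hA1, hB0, hB1]
      · rw [hsplit]
        linarith [P1, hYk.1, hYk.2, hY'k'.1, hY'k'.2, hS0, hS1, hA0, hA1, hB0, hB1]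
    rw [hsplit] at hD0
    linarith
  have R2i : ∀ i, k + 1 ≤ i → i < n → Y i = W (i - 1) := by
    intro i h1 h2
    have h3 := R2 (i - 1) (by omega) (by omega)
    rw [(by omega : i - 1 + 1 = i)] at h3
    exact h3.symm
  have R2i' : ∀ i, k' + 1 ≤ i → i < n → Y' i = W (i - 1) := by
    intro i h1 h2
    have h3 := R2' (i - 1) (by omega) (by omega)
    rw [(by omega : i - 1 + 1 = i)] at h3
    exact h3.symm
  rcases eq_or_lt_of_le hkk' with rfl | hlt
  · -- k' = k
    simp only [Finset.Ico_self, Finset.sum_empty, add_zero] at hE0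
    have hYY : Y k = Y' k ∧ (1 ≤ k → Y (k - 1) = Y' (k - 1)) := by
      rcases Nat.eq_zero_or_pos k with hk00 | hk1
      · subst hk00
        constructor
        · push_cast at hE0; linarith
        · intro h; exact absurd h (by omega)
      · have hq1k : (q : ℤ) ≤ (k : ℤ) * q :=
          le_mul_of_one_le_left (by linarith) (by exact_mod_cast hk1)
        have hεε' : ε = ε' := by
          rcases hεb with rfl | rfl <;> rcases hε'b with rfl | rfl
          · rfl
          · exfalso; nlinarith [hYk.1, hYk.2, hY'k'.1, hY'k'.2]
          · exfalso; nlinarith [hYk.1, hYk.2, hY'k'.1, hY'k'.2]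
          · rfl
        subst hεε'
        have h1 : Y k = Y' k := by linarith
        refine ⟨h1, fun hk1' => ?_⟩
        have h2 := R3 hk1'
        have h3 := R3' hk1'
        linarith
    intro i hi
    rcases lt_trichotomy (i + 1) k with h | h | h
    · rw [← R1 i h, ← R1' i h]
    · have h2 := hYY.2 (by omega)
      rwa [(by omega : k - 1 = i)] at h2
    · rcases Nat.eq_or_lt_of_le (show k ≤ i by omega) with h4 | h4
      · rw [← h4]; exact hYY.1
      · rw [R2i i (by omega) hi, R2i' i (by omega) hi]
  · -- k < k'
    have hltZ : (k : ℤ) < k' := by exact_mod_cast hlt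
    have hk'1 : 1 ≤ k' := by omega
    have hsplit2 : ∑ j ∈ Finset.Ico k k', W j
        = ∑ j ∈ Finset.Ico k (k' - 1), W j + W (k' - 1) := by
      conv_lhs => rw [(by omega : k' = (k' - 1) + 1)]
      rw [Finset.sum_Ico_succ_top (by omega : k ≤ k' - 1)]
    have hS'0 : 0 ≤ ∑ j ∈ Finset.Ico k (k' - 1), W j :=
      Finset.sum_nonneg fun j hj => (hWb j (by simp only [Finset.mem_Ico] at hj; omega)).1
    have hS'1 : ∑ j ∈ Finset.Ico k (k' - 1), W j ≤ ((k' : ℤ) - 1 - k) * ((q : ℤ) - 1) := by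
      have h1 := Finset.sum_le_card_nsmul (Finset.Ico k (k' - 1)) W ((q : ℤ) - 1)
        (fun j hj => by
          have := (hWb j (by simp only [Finset.mem_Ico] at hj; omega)).2; linarith)
      rw [Nat.card_Ico, nsmul_eq_mul] at h1
      have hcast : ((k' - 1 - k : ℕ) : ℤ) = (k' : ℤ) - 1 - k := by omega
      rwa [hcast] at h1
    have hR3' := R3' hk'1
    have hWk'b := hWb (k' - 1) (by omega)
    have hY'k'm := hY'b (k' - 1) (by omega)
    rw [hsplit2] at hE0
    rcases hε'b with hε'varzero | hε'varone
    swap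
    · -- ε' = 1 : contradiction
      exfalso
      subst hε'varone
      linarith [hE0, hR3', hS'1, hS'0, hA0, hA1, hYk.1, hYk.2, hY'k'.1, hY'k'.2,
        hY'k'm.1, hY'k'm.2, hWk'b.1, hWk'b.2, hltZ]
    · subst hε'varzero
      have hR3'' : W (k' - 1) = Y' (k' - 1) + Y' k' := by linarith [hR3']
      have hsum0 : Y k + (∑ j ∈ Finset.Ico k (k' - 1), W j) + (k : ℤ) * ((q : ℤ) * ε)
          + Y' (k' - 1) = 0 := by linarith [hE0, hR3'']
      have hYk0 : Y k = 0 := le_antisymm (by linarith [hS'0, hA0, hY'k'm.1]) hYk.1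
      have hSig0 : ∑ j ∈ Finset.Ico k (k' - 1), W j = 0 :=
        le_antisymm (by linarith [hYk.1, hA0, hY'k'm.1]) hS'0
      have hKQε : (k : ℤ) * ((q : ℤ) * ε) = 0 :=
        le_antisymm (by linarith [hYk.1, hS'0, hY'k'm.1]) hA0
      have hY'km0 : Y' (k' - 1) = 0 :=
        le_antisymm (by linarith [hYk.1, hS'0, hA0]) hY'k'm.1
      have hY'k'W : Y' k' = W (k' - 1) := by linarith [hR3'']
      have hW0 : ∀ j, k ≤ j → j < k' - 1 → W j = 0 := by
        intro j h1 h2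
        exact (Finset.sum_eq_zero_iff_of_nonneg
          (fun j hj => (hWb j (by simp only [Finset.mem_Ico] at hj; omega)).1)).mp hSig0
          j (Finset.mem_Ico.mpr ⟨h1, h2⟩)
      have hε0 : 1 ≤ k → ε = 0 := by
        intro hk1
        rcases hεb with rfl | rfl
        · rfl
        · exfalso
          have : (1 : ℤ) ≤ (k : ℤ) := by exact_mod_cast hk1
          nlinarith [hKQε]
      intro i hi
      by_cases h1 : i + 1 < k
      · rw [← R1 i h1, ← R1' i (by omega)]
      by_cases h2 : i + 1 = k
      · have hk1 : 1 ≤ k := by omega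
        have h3 := R3 hk1
        have h4 := R1' (k - 1) (by omega)
        have h5 : Y (k - 1) = Y' (k - 1) := by
          rw [← h4]; rw [hε0 hk1] at h3; linarith [hYk0]
        rwa [(by omega : k - 1 = i)] at h5
      by_cases h3 : i + 1 < k'
      · have hY'i : Y' i = W i := (R1' i h3).symm
        have hWi : W i = 0 := hW0 i (by omega) (by omega)
        have hYi : Y i = 0 := by
          rcases Nat.eq_or_lt_of_le (show k ≤ i by omega) with h4 | h4
          · rw [← h4]; exact hYk0
          · rw [R2i i (by omega) hi]
            exact hW0 (i - 1) (by omega) (by omega)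
        rw [hYi, hY'i, hWi]
      by_cases h4 : i + 1 = k'
      · have hY'i : Y' i = 0 := by rw [(by omega : i = k' - 1)]; exact hY'km0
        have hYi : Y i = 0 := by
          rcases Nat.eq_or_lt_of_le (show k ≤ i by omega) with h5 | h5
          · rw [← h5]; exact hYk0
          · rw [R2i i (by omega) hi]
            exact hW0 (i - 1) (by omega) (by omega)
        rw [hYi, hY'i]
      by_cases h5 : i = k'
      · subst h5
        rw [R2i i (by omega) hi, hY'k'W]
      · rw [R2i i (by omega) hi, R2i' i (by omega) hi]

set_option maxHeartbeats 2000000 in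
lemma key_lemma (q n p : ℕ) (hq : 2 ≤ q) (hpq : Nat.gcd p q = 1)
    (x x' : List ℕ) (hxlen : x.length = n) (hxq : ∀ b ∈ x, b < q)
    (hx'len : x'.length = n) (hx'q : ∀ b ∈ x', b < q)
    (k k' : ℕ) (hk : k < n) (hk' : k' < n) (hkk' : k ≤ k')
    (hz : x.eraseIdx k = x'.eraseIdx k')
    (hsyn : ((q : ℤ) * (n : ℤ)) ∣ ((synL (gammaL q p x) : ℤ) - (synL (gammaL q p x') : ℤ))) :
    x = x' := by
  have hq0 : 0 < q := by omega
  have hkx : k < x.length := by omega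
  have hk'x' : k' < x'.length := by omega
  have E1 := syn_eraseIdx q p hq0 x k hkx
  have E2 := syn_eraseIdx q p hq0 x' k' hk'x'
  rw [hxlen] at E1
  rw [hx'len, ← hz] at E2
  have HYY := case_analysis q n k k'
    (fun i => ((gammaL q p x).getD i 0 : ℤ))
    (fun i => ((gammaL q p x').getD i 0 : ℤ))
    (fun j => ((gammaL q p (x.eraseIdx k)).getD j 0 : ℤ))
    (if (q : ℤ) ≤ ((gammaL q p x).getD (k - 1) 0 : ℤ) + ((gammaL q p x).getD k 0 : ℤ)
      then 1 else 0)
    (if (q : ℤ) ≤ ((gammaL q p x').getD (k' - 1) 0 : ℤ) + ((gammaL q p x').getD k' 0 : ℤ)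
      then 1 else 0)
    hq hk hk' hkk'
    (fun i hi => ⟨by positivity, by
      show ((gammaL q p x).getD i 0 : ℤ) < (q : ℤ)
      exact_mod_cast gammaL_getD_lt q p hq0 x i (by omega)⟩)
    (fun i hi => ⟨by positivity, by
      show ((gammaL q p x').getD i 0 : ℤ) < (q : ℤ)
      exact_mod_cast gammaL_getD_lt q p hq0 x' i (by omega)⟩)
    (fun j hj => ⟨by positivity, by
      show ((gammaL q p (x.eraseIdx k)).getD j 0 : ℤ) < (q : ℤ)
      have hlen : (x.eraseIdx k).length = x.length - 1 := by
        rw [List.length_eraseIdx]; simp [hkx]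
      exact_mod_cast gammaL_getD_lt q p hq0 (x.eraseIdx k) j (by omega)⟩)
    (by
      by_cases h : (q : ℤ) ≤ ((gammaL q p x).getD (k - 1) 0 : ℤ) +
          ((gammaL q p x).getD k 0 : ℤ)
      · right; rw [if_pos h]
      · left; rw [if_neg h])
    (by
      by_cases h : (q : ℤ) ≤ ((gammaL q p x').getD (k' - 1) 0 : ℤ) +
          ((gammaL q p x').getD k' 0 : ℤ)
      · right; rw [if_pos h]
      · left; rw [if_neg h])
    (fun j hj => by
      show ((gammaL q p (x.eraseIdx k)).getD j 0 : ℤ) = ((gammaL q p x).getD j 0 : ℤ)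
      exact_mod_cast gamma_erase_lt q p hq0 x k j hkx hj)
    (fun j hjk hj => by
      show ((gammaL q p (x.eraseIdx k)).getD j 0 : ℤ) = ((gammaL q p x).getD (j + 1) 0 : ℤ)
      exact_mod_cast gamma_erase_ge q p hq0 x k j hkx hjk (by omega))
    (fun h1 => gamma_erase_merge q p hq0 x k h1 hkx)
    (fun j hj => by
      show ((gammaL q p (x.eraseIdx k)).getD j 0 : ℤ) = ((gammaL q p x').getD j 0 : ℤ)
      have h := gamma_erase_lt q p hq0 x' k' j hk'x' hj
      rw [← hz] at h
      exact_mod_cast h)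
    (fun j hjk hj => by
      show ((gammaL q p (x.eraseIdx k)).getD j 0 : ℤ) = ((gammaL q p x').getD (j + 1) 0 : ℤ)
      have h := gamma_erase_ge q p hq0 x' k' j hk'x' hjk (by omega)
      rw [← hz] at h
      exact_mod_cast h)
    (fun h1 => by
      have h := gamma_erase_merge q p hq0 x' k' h1 hk'x'
      rw [← hz] at h
      exact h)
    (by
      have e : (synL (gammaL q p x) : ℤ) - (synL (gammaL q p x') : ℤ) =
          (((gammaL q p x).getD k 0 : ℤ)
            + ∑ j ∈ Finset.Ico k (n - 1), ((gammaL q p (x.eraseIdx k)).getD j 0 : ℤ)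
            + (k : ℤ) * ((q : ℤ) *
              (if (q : ℤ) ≤ ((gammaL q p x).getD (k - 1) 0 : ℤ) +
                ((gammaL q p x).getD k 0 : ℤ) then 1 else 0)))
          - (((gammaL q p x').getD k' 0 : ℤ)
            + ∑ j ∈ Finset.Ico k' (n - 1), ((gammaL q p (x.eraseIdx k)).getD j 0 : ℤ)
            + (k' : ℤ) * ((q : ℤ) *
              (if (q : ℤ) ≤ ((gammaL q p x').getD (k' - 1) 0 : ℤ) +
                ((gammaL q p x').getD k' 0 : ℤ) then 1 else 0))) := by
        rw [E1, E2]; ring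
      rw [← e]
      exact hsyn)
  exact gammaL_inj q p hq0 hpq x x' (by omega) hxq hx'q
    (fun i hi => by
      have h : ((gammaL q p x).getD i 0 : ℤ) = ((gammaL q p x').getD i 0 : ℤ) :=
        HYY i (by omega)
      exact_mod_cast h)

theorem stmt_17 (q n p a : ℕ) (hq : 2 ≤ q) (hn : 1 ≤ n)
    (hp1 : 1 ≤ p) (hp2 : p ≤ q - 1) (hpq : Nat.gcd p q = 1) (ha : a < q * n)
    (x x' : List ℕ)
    (hxlen : x.length = n) (hxq : ∀ b ∈ x, b < q)
    (hx'len : x'.length = n) (hx'q : ∀ b ∈ x', b < q)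
    (hxsyn : synL (gammaL q p x) % (q * n) = a)
    (hx'syn : synL (gammaL q p x') % (q * n) = a)
    (hne : x ≠ x') :
    ¬ ∃ z : List ℕ, (∃ i < n, z = x.eraseIdx i) ∧ (∃ i < n, z = x'.eraseIdx i) := by
  rintro ⟨z, ⟨i, hi, hzi⟩, ⟨i', hi', hzi'⟩⟩
  have hz : x.eraseIdx i = x'.eraseIdx i' := by rw [← hzi, ← hzi']
  have hmod : synL (gammaL q p x) % (q * n) = synL (gammaL q p x') % (q * n) := by
    rw [hxsyn, hx'syn]
  have h1 : Nat.ModEq (q * n) (synL (gammaL q p x')) (synL (gammaL q p x)) := hmod.symm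
  have hdvd : ((q : ℤ) * (n : ℤ)) ∣
      ((synL (gammaL q p x) : ℤ) - (synL (gammaL q p x') : ℤ)) := by
    have h2 := h1.dvd
    push_cast at h2
    exact h2
  rcases le_total i i' with h | h
  · exact hne (key_lemma q n p hq hpq x x' hxlen hxq hx'len hx'q i i' hi hi' h hz hdvd)
  · have hdvd' : ((q : ℤ) * (n : ℤ)) ∣
        ((synL (gammaL q p x') : ℤ) - (synL (gammaL q p x) : ℤ)) := by
      have h3 := dvd_neg.mpr hdvd
      rwa [neg_sub] at h3
    exact hne (key_lemma q n p hq hpq x' x hx'len hx'q hxlen hxq i' i hi' hi h hz.symm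
      hdvd').symm
end
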